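/- arXiv:1804.00355 — 7 statements merged into one kernel-verified Lean document; each statement's English description precedes it below -/
import Mathlib

section
/- Let (Ω,P) be a measure space with σ-finite measure P and {p_μ : μ ∈ M} a family of probability densities w.r.t. P indexed by M ⊆ ℝ^m; for measurable φ : Ω → ℝ set Φ(φ;μ) = ln(∫_Ω e^{φ(ω)} p_μ(ω) P(dω)). Let K, I, the sets X_j, maps A_j, vector g and ε ∈ (0,1) be as in the linear-form recovery problem. For each pair 1 ≤ i,j ≤ I choose α_{ij} > 0 and a measurable φ_{ij} : Ω → ℝ for which all the quantities Ψ_{i,+}(α_{ij},φ_{ij}) and Ψ_{j,−}(α_{ij},φ_{ij}) are finite, and set ρ_{ij} = ½[Ψ_{i,+}(α_{ij},φ_{ij}) + Ψ_{j,−}(α_{ij},φ_{ij})], κ_{ij} = ½[Ψ_{j,−}(α_{ij},φ_{ij}) − Ψ_{i,+}(α_{ij},φ_{ij})], g_{ij}(ω^K) = Σ_{k=1}^K φ_{ij}(ω_k) + κ_{ij}, and define the estimate ĝ(ω^K) = ½[min_{i≤I} max_{j≤I} g_{ij}(ω^K) + max_{j≤I} min_{i≤I} g_{ij}(ω^K)].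 Let ρ_ℓ = max_{1≤j≤I} max[ρ_{ℓj}, ρ_{jℓ}] and ρ = max_{1≤i,j≤I} ρ_{ij}. Then for every ℓ ≤ I and every x ∈ X_ℓ, the p^K_{A_ℓ(x)}-probability of the event {|ĝ(ω^K) − g^T x| > ρ_ℓ} is at most ε; consequently Risk_ε[ĝ] ≤ ρ. -/
open MeasureTheory
open scoped ENNReal

/-- The distribution of `K` i.i.d. observations drawn from the distribution with density
`f` w.r.t. `P`: the `K`-fold product measure `P^K` weighted by the product density. -/
noncomputable def prodDensityMeasure {Ω : Type*} [MeasurableSpace Ω] (P : Measure Ω)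
    (K : ℕ) (f : Ω → ℝ) : Measure (Fin K → Ω) :=
  (Measure.pi fun _ : Fin K => P).withDensity fun y => ENNReal.ofReal (∏ k, f (y k))

/-- `Φ(φ; f) = ln ∫ e^{φ} f dP`. -/
noncomputable def logMGF {Ω : Type*} [MeasurableSpace Ω] (P : Measure Ω)
    (φ f : Ω → ℝ) : ℝ :=
  Real.log (∫ ω, Real.exp (φ ω) * f ω ∂P)

section LinearProblem

variable {Ω : Type*} [MeasurableSpace Ω] (P : Measure Ω) {m n : ℕ}
  {ι : Type*} [Fintype ι]
  (p : (Fin m → ℝ) → Ω → ℝ) (X : ι → Set (Fin n → ℝ))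
  (A : ι → (Fin n → ℝ) →ᵃ[ℝ] (Fin m → ℝ)) (g : Fin n → ℝ) (ε : ℝ) (K : ℕ)

/-- The set whose supremum is `Ψ_{ℓ,+}(β,ψ)`. -/
def PsiPlusSet (ℓ : ι) (β : ℝ) (ψ : Ω → ℝ) : Set ℝ :=
  {v | ∃ x ∈ X ℓ, v = (K : ℝ) * β * logMGF P (fun ω => ψ ω / β) (p (A ℓ x))
    - (∑ i, g i * x i) + β * Real.log (2 * (Fintype.card ι : ℝ) / ε)}

/-- The set whose supremum is `Ψ_{ℓ,−}(β,ψ)`. -/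
def PsiMinusSet (ℓ : ι) (β : ℝ) (ψ : Ω → ℝ) : Set ℝ :=
  {v | ∃ x ∈ X ℓ, v = (K : ℝ) * β * logMGF P (fun ω => -ψ ω / β) (p (A ℓ x))
    + (∑ i, g i * x i) + β * Real.log (2 * (Fintype.card ι : ℝ) / ε)}

/-- `Ψ_{ℓ,+}(β,ψ) = max_{x∈X_ℓ}[KβΦ(ψ/β; A_ℓ(x)) − gᵀx + β ln(2I/ε)]`. -/
noncomputable def PsiPlus (ℓ : ι) (β : ℝ) (ψ : Ω → ℝ) : ℝ :=
  sSup (PsiPlusSet P p X A g ε K ℓ β ψ)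

/-- `Ψ_{ℓ,−}(β,ψ) = max_{x∈X_ℓ}[KβΦ(−ψ/β; A_ℓ(x)) + gᵀx + β ln(2I/ε)]`. -/
noncomputable def PsiMinus (ℓ : ι) (β : ℝ) (ψ : Ω → ℝ) : ℝ :=
  sSup (PsiMinusSet P p X A g ε K ℓ β ψ)

end LinearProblem

lemma lintegral_pi_pow {Ω : Type*} [MeasurableSpace Ω] (P : Measure Ω) [SigmaFinite P] :
    ∀ (K : ℕ) (F : Ω → ℝ≥0∞), Measurable F →
      ∫⁻ y, ∏ k : Fin K, F (y k) ∂(Measure.pi fun _ : Fin K => P) = (∫⁻ ω, F ω ∂P) ^ K := by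
  intro K
  induction K with
  | zero =>
      intro F hF
      simp [Measure.pi_empty_univ]
  | succ K ih =>
      intro F hF
      have mp := (measurePreserving_piFinSuccAbove (fun _ : Fin (K + 1) => P) 0).symm
      rw [← mp.lintegral_comp_emb (MeasurableEquiv.measurableEmbedding _)]
      have : ∀ a : Ω × (Fin K → Ω), ∏ k : Fin (K + 1),
          F ((MeasurableEquiv.piFinSuccAbove (fun _ => Ω) 0).symm a k)
          = F a.1 * ∏ k : Fin K, F (a.2 k) := by
        intro a
        rw [Fin.prod_univ_succ]
        simp [MeasurableEquiv.piFinSuccAbove_symm_apply, Fin.zero_succAbove]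
      simp_rw [this]
      have hmeas : Measurable fun x : Fin K → Ω => ∏ k : Fin K, F (x k) :=
        Finset.measurable_prod _ fun k _ => hF.comp (measurable_pi_apply k)
      rw [lintegral_prod_mul hF.aemeasurable hmeas.aemeasurable, ih F hF, pow_succ, mul_comm]

lemma chernoff_lemma {Ω : Type*} [MeasurableSpace Ω] (P : Measure Ω) [SigmaFinite P] (K : ℕ)
    (f pp : Ω → ℝ) (hf : Measurable f) (hpp : Measurable pp) (hpp0 : ∀ ω, 0 ≤ pp ω)
    (hInt : Integrable (fun ω => Real.exp (f ω) * pp ω) P) (s : ℝ) :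
    prodDensityMeasure P K pp {y | s < ∑ k, f (y k)}
      ≤ ENNReal.ofReal (Real.exp (-s) * (∫ ω, Real.exp (f ω) * pp ω ∂P) ^ K) := by
  set a := ∫ ω, Real.exp (f ω) * pp ω ∂P with ha
  have hE : MeasurableSet {y : Fin K → Ω | s < ∑ k, f (y k)} :=
    measurableSet_lt measurable_const
      (Finset.measurable_sum _ fun k _ => hf.comp (measurable_pi_apply k))
  have hGmeas : Measurable fun ω => ENNReal.ofReal (Real.exp (f ω) * pp ω) :=
    ((Real.measurable_exp.comp hf).mul hpp).ennreal_ofReal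
  rw [prodDensityMeasure, withDensity_apply _ hE]
  calc
    ∫⁻ y in {y : Fin K → Ω | s < ∑ k, f (y k)},
        ENNReal.ofReal (∏ k, pp (y k)) ∂(Measure.pi fun _ : Fin K => P)
      ≤ ∫⁻ y, ENNReal.ofReal (Real.exp (-s)) *
          ∏ k, ENNReal.ofReal (Real.exp (f (y k)) * pp (y k))
          ∂(Measure.pi fun _ : Fin K => P) := by
        rw [← lintegral_indicator hE]
        apply lintegral_mono
        intro y
        by_cases hy : y ∈ {y : Fin K → Ω | s < ∑ k, f (y k)}
        · rw [Set.indicator_of_mem hy]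
          have h1 : ∀ k : Fin K, ENNReal.ofReal (Real.exp (f (y k)) * pp (y k)) =
              ENNReal.ofReal (Real.exp (f (y k))) * ENNReal.ofReal (pp (y k)) := fun k =>
            ENNReal.ofReal_mul (Real.exp_pos _).le
          simp_rw [h1]
          rw [Finset.prod_mul_distrib, ← ENNReal.ofReal_prod_of_nonneg
              (fun k _ => (Real.exp_pos (f (y k))).le),
            ← Real.exp_sum, ← mul_assoc, ← ENNReal.ofReal_mul (Real.exp_pos _).le,
            ← Real.exp_add, ← ENNReal.ofReal_prod_of_nonneg (fun k _ => hpp0 (y k))]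
          refine le_mul_of_one_le_left zero_le (ENNReal.one_le_ofReal.mpr ?_)
          have hs : s < ∑ k, f (y k) := hy
          calc (1 : ℝ) = Real.exp 0 := Real.exp_zero.symm
            _ ≤ Real.exp (-s + ∑ k, f (y k)) := Real.exp_le_exp.mpr (by linarith)
        · rw [Set.indicator_of_notMem hy]
          exact zero_le
    _ = ENNReal.ofReal (Real.exp (-s)) *
          (∫⁻ ω, ENNReal.ofReal (Real.exp (f ω) * pp ω) ∂P) ^ K := by
        have hm : Measurable fun y : Fin K → Ω =>
            ∏ k, ENNReal.ofReal (Real.exp (f (y k)) * pp (y k)) :=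
          Finset.measurable_prod _ fun k _ => hGmeas.comp (measurable_pi_apply k)
        rw [lintegral_const_mul _ hm, lintegral_pi_pow P K _ hGmeas]
    _ = ENNReal.ofReal (Real.exp (-s) * a ^ K) := by
        rw [← ofReal_integral_eq_lintegral_ofReal hInt
            (Filter.Eventually.of_forall fun ω =>
              mul_nonneg (Real.exp_pos _).le (hpp0 ω)),
          ← ENNReal.ofReal_pow (integral_nonneg fun ω =>
              mul_nonneg (Real.exp_pos _).le (hpp0 ω)),
          ← ENNReal.ofReal_mul (Real.exp_pos _).le]

lemma exp_pow_le {K : ℕ} (hK : 0 < K) {a s δ : ℝ} (ha : 0 ≤ a) (hδ : 0 < δ)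
    (h : (K : ℝ) * Real.log a - Real.log δ ≤ s) : Real.exp (-s) * a ^ K ≤ δ := by
  rcases eq_or_lt_of_le ha with ha0 | ha0
  · rw [← ha0, zero_pow hK.ne', mul_zero]
    exact hδ.le
  · have : a ^ K = Real.exp ((K : ℝ) * Real.log a) := by
      rw [Real.exp_nat_mul, Real.exp_log ha0]
    rw [this, ← Real.exp_add]
    calc Real.exp (-s + (K : ℝ) * Real.log a) ≤ Real.exp (Real.log δ) :=
          Real.exp_le_exp.mpr (by linarith)
      _ = δ := Real.exp_log hδ

lemma chernoff_eps {Ω : Type*} [MeasurableSpace Ω] (P : Measure Ω) [SigmaFinite P] {K : ℕ}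
    (hK : 0 < K) (f pp : Ω → ℝ) (hf : Measurable f) (hpp : Measurable pp)
    (hpp0 : ∀ ω, 0 ≤ pp ω) (hInt : Integrable (fun ω => Real.exp (f ω) * pp ω) P)
    {δ s : ℝ} (hδ : 0 < δ)
    (h : (K : ℝ) * Real.log (∫ ω, Real.exp (f ω) * pp ω ∂P) - Real.log δ ≤ s) :
    prodDensityMeasure P K pp {y | s < ∑ k, f (y k)} ≤ ENNReal.ofReal δ :=
  le_trans (chernoff_lemma P K f pp hf hpp hpp0 hInt s)
    (ENNReal.ofReal_le_ofReal (exp_pow_le hK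
      (integral_nonneg fun ω => mul_nonneg (Real.exp_pos _).le (hpp0 ω)) hδ h))


/-- **Proposition 1.** For the linear-form recovery problem, given feasible
solutions `(α i j, φ i j)` with finite `Ψ` values, the estimate
`ĝ(ω^K) = ½[min_i max_j g_{ij}(ω^K) + max_j min_i g_{ij}(ω^K)]` built from
`g_{ij}(ω^K) = Σ_k φ_{ij}(ω_k) + κ_{ij}` satisfies: for every `ℓ` and `x ∈ X_ℓ`, the
`p^K_{A_ℓ(x)}`-probability that `|ĝ(ω^K) − gᵀx| > ρ_ℓ` is at most `ε`; consequently
`Risk_ε[ĝ] ≤ ρ = max_{i,j} ρ_{ij}`. -/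
theorem linear_estimate_reliability {Ω : Type*} [MeasurableSpace Ω] (P : Measure Ω)
    [SigmaFinite P] {m n : ℕ} {ι : Type*} [Fintype ι] [Nonempty ι]
    (p : (Fin m → ℝ) → Ω → ℝ)
    (X : ι → Set (Fin n → ℝ)) (hXne : ∀ j, (X j).Nonempty)
    (hXconv : ∀ j, Convex ℝ (X j)) (hXcomp : ∀ j, IsCompact (X j))
    (A : ι → (Fin n → ℝ) →ᵃ[ℝ] (Fin m → ℝ))
    (hpm : ∀ j, ∀ x ∈ X j, Measurable (p (A j x)))
    (hp0 : ∀ j, ∀ x ∈ X j, ∀ ω, 0 ≤ p (A j x) ω)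
    (hp1 : ∀ j, ∀ x ∈ X j, ∫ ω, p (A j x) ω ∂P = 1)
    (g : Fin n → ℝ) (ε : ℝ) (hε : 0 < ε) (hε1 : ε < 1)
    (K : ℕ) (hK : 0 < K)
    (α : ι → ι → ℝ) (hα : ∀ i j, 0 < α i j)
    (φ : ι → ι → Ω → ℝ) (hφ : ∀ i j, Measurable (φ i j))
    -- finiteness of the quantities `Ψ_{i,+}(α_{ij},φ_{ij})`, `Ψ_{j,−}(α_{ij},φ_{ij})`:
    (hInt1 : ∀ i j, ∀ x ∈ X i,
      Integrable (fun ω => Real.exp (φ i j ω / α i j) * p (A i x) ω) P)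
    (hInt2 : ∀ i j, ∀ x ∈ X j,
      Integrable (fun ω => Real.exp (-(φ i j ω) / α i j) * p (A j x) ω) P)
    (hBdd1 : ∀ i j, BddAbove (PsiPlusSet P p X A g ε K i (α i j) (φ i j)))
    (hBdd2 : ∀ i j, BddAbove (PsiMinusSet P p X A g ε K j (α i j) (φ i j)))
    (ρ : ι → ι → ℝ)
    (hρ : ∀ i j, ρ i j = PsiPlus P p X A g ε K i (α i j) (φ i j) / 2 +
      PsiMinus P p X A g ε K j (α i j) (φ i j) / 2)
    (κ : ι → ι → ℝ)
    (hκ : ∀ i j, κ i j = PsiMinus P p X A g ε K j (α i j) (φ i j) / 2 -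
      PsiPlus P p X A g ε K i (α i j) (φ i j) / 2)
    (gest : ι → ι → (Fin K → Ω) → ℝ)
    (hgest : ∀ i j y, gest i j y = (∑ k, φ i j (y k)) + κ i j)
    (ghat : (Fin K → Ω) → ℝ)
    (hghat : ∀ y, ghat y = (1 / 2) *
      ((Finset.univ.inf' Finset.univ_nonempty fun i =>
          Finset.univ.sup' Finset.univ_nonempty fun j => gest i j y) +
       (Finset.univ.sup' Finset.univ_nonempty fun j =>
          Finset.univ.inf' Finset.univ_nonempty fun i => gest i j y)))
    (ρl : ι → ℝ)
    (hρl : ∀ ℓ, ρl ℓ = Finset.univ.sup' Finset.univ_nonempty fun j =>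
      max (ρ ℓ j) (ρ j ℓ))
    (ρtot : ℝ)
    (hρtot : ρtot = Finset.univ.sup' Finset.univ_nonempty fun q : ι × ι => ρ q.1 q.2) :
    (∀ ℓ : ι, ∀ x ∈ X ℓ,
      prodDensityMeasure P K (p (A ℓ x))
        {y | ρl ℓ < |ghat y - ∑ i, g i * x i|} ≤ ENNReal.ofReal ε) ∧
    sInf {ρ' : ℝ | ∀ j : ι, ∀ x ∈ X j,
        prodDensityMeasure P K (p (A j x))
          {y | ρ' < |ghat y - ∑ i, g i * x i|} ≤ ENNReal.ofReal ε} ≤ ρtot := by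
  have hcard : (0:ℝ) < (Fintype.card ι : ℝ) := by exact_mod_cast Fintype.card_pos
  set c : ℝ := (Fintype.card ι : ℝ) with hc
  have hδ : 0 < ε / (2 * c) := by positivity
  have h2c : (0:ℝ) < 2 * c := by positivity
  have hlogδ : Real.log (2 * c / ε) = - Real.log (ε / (2 * c)) := by
    rw [Real.log_div h2c.ne' hε.ne', Real.log_div hε.ne' h2c.ne']
    ring
  have key : ∀ ℓ : ι, ∀ x ∈ X ℓ,
      prodDensityMeasure P K (p (A ℓ x)) {y | ρl ℓ < |ghat y - ∑ i, g i * x i|}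
        ≤ ENNReal.ofReal ε := by
    intro ℓ x hx
    set T := ∑ i, g i * x i with hT
    set pp := p (A ℓ x) with hpp
    have hppm : Measurable pp := hpm ℓ x hx
    have hpp0 : ∀ ω, 0 ≤ pp ω := hp0 ℓ x hx
    have hub : ∀ j, prodDensityMeasure P K pp {y | T + ρ ℓ j < gest ℓ j y}
        ≤ ENNReal.ofReal (ε / (2 * c)) := by
      intro j
      have hψ : ρ ℓ j - κ ℓ j = PsiPlus P p X A g ε K ℓ (α ℓ j) (φ ℓ j) := by
        rw [hρ, hκ]; ring
      have hset : {y : Fin K → Ω | T + ρ ℓ j < gest ℓ j y} =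
          {y | (T + PsiPlus P p X A g ε K ℓ (α ℓ j) (φ ℓ j)) / α ℓ j
            < ∑ k, φ ℓ j (y k) / α ℓ j} := by
        ext y
        simp only [Set.mem_setOf_eq, hgest]
        rw [← Finset.sum_div, div_lt_div_iff_of_pos_right (hα ℓ j)]
        constructor <;> intro h <;> linarith
      rw [hset]
      have hmem : (K : ℝ) * α ℓ j * logMGF P (fun ω => φ ℓ j ω / α ℓ j) pp
          - T + α ℓ j * Real.log (2 * c / ε)
          ≤ PsiPlus P p X A g ε K ℓ (α ℓ j) (φ ℓ j) :=
        le_csSup (hBdd1 ℓ j) ⟨x, hx, rfl⟩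
      have harith : (K : ℝ) * Real.log (∫ ω, Real.exp (φ ℓ j ω / α ℓ j) * pp ω ∂P)
          - Real.log (ε / (2 * c))
          ≤ (T + PsiPlus P p X A g ε K ℓ (α ℓ j) (φ ℓ j)) / α ℓ j := by
        rw [le_div_iff₀ (hα ℓ j)]
        have hL : logMGF P (fun ω => φ ℓ j ω / α ℓ j) pp =
            Real.log (∫ ω, Real.exp (φ ℓ j ω / α ℓ j) * pp ω ∂P) := rfl
        rw [hL, hlogδ] at hmem
        set L := Real.log (∫ ω, Real.exp (φ ℓ j ω / α ℓ j) * pp ω ∂P) with hLdef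
        ring_nf at hmem ⊢
        linarith
      exact chernoff_eps P hK (fun ω => φ ℓ j ω / α ℓ j) pp ((hφ ℓ j).div_const _)
        hppm hpp0 (hInt1 ℓ j x hx) hδ harith
    have hlb : ∀ j, prodDensityMeasure P K pp {y | gest j ℓ y < T - ρ j ℓ}
        ≤ ENNReal.ofReal (ε / (2 * c)) := by
      intro j
      have hψ : ρ j ℓ + κ j ℓ = PsiMinus P p X A g ε K ℓ (α j ℓ) (φ j ℓ) := by
        rw [hρ, hκ]; ring
      have hset : {y : Fin K → Ω | gest j ℓ y < T - ρ j ℓ} =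
          {y | (PsiMinus P p X A g ε K ℓ (α j ℓ) (φ j ℓ) - T) / α j ℓ
            < ∑ k, -φ j ℓ (y k) / α j ℓ} := by
        ext y
        have hsum : (∑ k, -φ j ℓ (y k) / α j ℓ)
            = (-(∑ k, φ j ℓ (y k))) / α j ℓ := by
          rw [← Finset.sum_div, Finset.sum_neg_distrib]
        simp only [Set.mem_setOf_eq, hgest]
        rw [hsum, div_lt_div_iff_of_pos_right (hα j ℓ)]
        constructor <;> intro h <;> linarith
      rw [hset]
      have hmem : (K : ℝ) * α j ℓ * logMGF P (fun ω => -φ j ℓ ω / α j ℓ) pp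
          + T + α j ℓ * Real.log (2 * c / ε)
          ≤ PsiMinus P p X A g ε K ℓ (α j ℓ) (φ j ℓ) :=
        le_csSup (hBdd2 j ℓ) ⟨x, hx, rfl⟩
      have harith : (K : ℝ) * Real.log (∫ ω, Real.exp (-φ j ℓ ω / α j ℓ) * pp ω ∂P)
          - Real.log (ε / (2 * c))
          ≤ (PsiMinus P p X A g ε K ℓ (α j ℓ) (φ j ℓ) - T) / α j ℓ := by
        rw [le_div_iff₀ (hα j ℓ)]
        have hL : logMGF P (fun ω => -φ j ℓ ω / α j ℓ) pp =
            Real.log (∫ ω, Real.exp (-φ j ℓ ω / α j ℓ) * pp ω ∂P) := rfl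
        rw [hL, hlogδ] at hmem
        set L := Real.log (∫ ω, Real.exp (-φ j ℓ ω / α j ℓ) * pp ω ∂P) with hLdef
        ring_nf at hmem ⊢
        linarith
      exact chernoff_eps P hK (fun ω => -φ j ℓ ω / α j ℓ) pp (((hφ j ℓ).neg).div_const _)
        hppm hpp0 (hInt2 j ℓ x hx) hδ harith
    have hsub : {y : Fin K → Ω | ρl ℓ < |ghat y - T|} ⊆
        ⋃ j, ({y | T + ρ ℓ j < gest ℓ j y} ∪ {y | gest j ℓ y < T - ρ j ℓ}) := by
      intro y hy
      by_contra hbad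
      simp only [Set.mem_iUnion, Set.mem_union, Set.mem_setOf_eq, not_exists, not_or,
        not_lt] at hbad
      simp only [Set.mem_setOf_eq, hghat] at hy
      have hρlj : ∀ j, ρ ℓ j ≤ ρl ℓ := fun j => by
        rw [hρl]
        exact le_trans (le_max_left _ _) (Finset.le_sup' (fun j' => max (ρ ℓ j') (ρ j' ℓ)) (Finset.mem_univ j))
      have hρjl : ∀ j, ρ j ℓ ≤ ρl ℓ := fun j => by
        rw [hρl]
        exact le_trans (le_max_right _ _) (Finset.le_sup' (fun j' => max (ρ ℓ j') (ρ j' ℓ)) (Finset.mem_univ j))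
      set Aq := Finset.univ.inf' Finset.univ_nonempty fun i =>
        Finset.univ.sup' Finset.univ_nonempty fun j => gest i j y with hAq
      set Bq := Finset.univ.sup' Finset.univ_nonempty fun j =>
        Finset.univ.inf' Finset.univ_nonempty fun i => gest i j y with hBq
      have hBA : Bq ≤ Aq := by
        apply Finset.le_inf'
        intro i _
        apply Finset.sup'_le
        intro j _
        exact le_trans (Finset.inf'_le (fun i' => gest i' j y) (Finset.mem_univ i))
          (Finset.le_sup' (fun j' => gest i j' y) (Finset.mem_univ j))
      have hA : Aq ≤ T + ρl ℓ := by
        refine le_trans (Finset.inf'_le _ (Finset.mem_univ ℓ)) ?_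
        apply Finset.sup'_le
        intro j _
        exact le_trans (hbad j).1 (by linarith [hρlj j])
      have hB : T - ρl ℓ ≤ Bq := by
        refine le_trans ?_ (Finset.le_sup' _ (Finset.mem_univ ℓ))
        apply Finset.le_inf'
        intro i _
        exact le_trans (by linarith [hρjl i]) (hbad i).2
      have habs : |1 / 2 * (Aq + Bq) - T| ≤ ρl ℓ := by
        rw [abs_le]
        constructor <;> linarith
      exact absurd hy (not_lt.mpr habs)
    refine le_trans (measure_mono hsub) (le_trans (measure_iUnion_le _) ?_)
    rw [tsum_fintype]
    refine le_trans (Finset.sum_le_sum (fun j _ =>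
      le_trans (measure_union_le _ _) (add_le_add (hub j) (hlb j)))) (le_of_eq ?_)
    rw [Finset.sum_const, ← ENNReal.ofReal_add hδ.le hδ.le]
    have h2 : ε / (2 * c) + ε / (2 * c) = ε / c := by
      field_simp
      ring
    rw [h2, Finset.card_univ, nsmul_eq_mul, ← ENNReal.ofReal_natCast,
      ← ENNReal.ofReal_mul hcard.le]
    congr 1
    field_simp
  refine ⟨key, ?_⟩
  have hmemtot : ρtot ∈ {ρ' : ℝ | ∀ j : ι, ∀ x ∈ X j,
      prodDensityMeasure P K (p (A j x))
        {y | ρ' < |ghat y - ∑ i, g i * x i|} ≤ ENNReal.ofReal ε} := by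
    intro j x hx
    refine le_trans (measure_mono ?_) (key j x hx)
    intro y hy
    have hρlj : ρl j ≤ ρtot := by
      rw [hρl, hρtot]
      apply Finset.sup'_le
      intro k _
      rw [max_le_iff]
      exact ⟨Finset.le_sup' (f := fun q : ι × ι => ρ q.1 q.2) (Finset.mem_univ (j, k)),
        Finset.le_sup' (f := fun q : ι × ι => ρ q.1 q.2) (Finset.mem_univ (k, j))⟩
    exact lt_of_le_of_lt hρlj hy
  have hlb0 : ∀ ρ' ∈ {ρ' : ℝ | ∀ j : ι, ∀ x ∈ X j,
      prodDensityMeasure P K (p (A j x))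
        {y | ρ' < |ghat y - ∑ i, g i * x i|} ≤ ENNReal.ofReal ε}, (0:ℝ) ≤ ρ' := by
    intro ρ' hρ'
    by_contra hneg
    push_neg at hneg
    obtain ⟨j⟩ := (inferInstance : Nonempty ι)
    obtain ⟨x, hx⟩ := hXne j
    have h1 := hρ' j x hx
    have huniv : {y : Fin K → Ω | ρ' < |ghat y - ∑ i, g i * x i|} = Set.univ := by
      ext y
      simp only [Set.mem_setOf_eq, Set.mem_univ, iff_true]
      exact lt_of_lt_of_le hneg (abs_nonneg _)
    have hint : Integrable (p (A j x)) P := by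
      by_contra h
      have h0 := hp1 j x hx
      rw [integral_undef h] at h0
      exact zero_ne_one h0
    have hmass : prodDensityMeasure P K (p (A j x)) Set.univ = 1 := by
      rw [prodDensityMeasure, withDensity_apply _ MeasurableSet.univ,
        Measure.restrict_univ]
      have heq : ∀ y : Fin K → Ω, ENNReal.ofReal (∏ k, p (A j x) (y k)) =
          ∏ k, ENNReal.ofReal (p (A j x) (y k)) :=
        fun y => ENNReal.ofReal_prod_of_nonneg fun k _ => hp0 j x hx (y k)
      simp_rw [heq]
      rw [lintegral_pi_pow P K _ (hpm j x hx).ennreal_ofReal,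
        ← ofReal_integral_eq_lintegral_ofReal hint
          (Filter.Eventually.of_forall (hp0 j x hx)),
        hp1 j x hx]
      simp
    rw [huniv, hmass] at h1
    exact absurd (lt_of_le_of_lt h1 (ENNReal.ofReal_lt_one.mpr hε1)) (lt_irrefl _)
  exact csInf_le ⟨0, hlb0⟩ hmemtot
end

section
/- Let (Ω,P) be a measure space with σ-finite measure P, and let p, q be probability densities w.r.t. P that are positive P-almost everywhere. Then for every measurable ψ : Ω → ℝ for which both integrals are finite, ln(∫_Ω e^{ψ(ω)} p(ω) P(dω)) + ln(∫_Ω e^{−ψ(ω)} q(ω) P(dω)) ≥ 2 ln(∫_Ω √(p(ω) q(ω)) P(dω)), and equality holds for ψ = ½ ln(q/p). Consequently, the infimum of the left-hand side over any family of measurable functions containing ½ ln(q/p) equals 2 ln(∫_Ω √(p q) dP). -/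
open MeasureTheory

private lemma aux_exp_half_log {a b : ℝ} (ha : 0 < a) (hb : 0 < b) :
    Real.exp ((1 / 2) * Real.log (b / a)) * a = Real.sqrt (a * b) := by
  have hba : 0 < b / a := by positivity
  calc Real.exp ((1 / 2) * Real.log (b / a)) * a
      = (b / a) ^ ((1:ℝ) / 2) * a := by
        rw [Real.rpow_def_of_pos hba, mul_comm (Real.log (b / a))]
    _ = Real.sqrt (b / a) * Real.sqrt (a ^ 2) := by
        rw [Real.sqrt_eq_rpow, Real.sqrt_sq ha.le]
    _ = Real.sqrt ((b / a) * a ^ 2) := (Real.sqrt_mul hba.le _).symm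
    _ = Real.sqrt (a * b) := by congr 1; field_simp

private lemma aux_exp_neg_half_log {a b : ℝ} (ha : 0 < a) (hb : 0 < b) :
    Real.exp (-((1 / 2) * Real.log (b / a))) * b = Real.sqrt (a * b) := by
  have hlog : Real.log (a / b) = -Real.log (b / a) := by
    rw [← Real.log_inv, inv_div]
  have h : -((1 / 2 : ℝ) * Real.log (b / a)) = (1 / 2) * Real.log (a / b) := by
    rw [hlog]; ring
  rw [h, aux_exp_half_log hb ha, mul_comm]

/-- For probability densities `p`, `q` (positive `P`-a.e.) w.r.t. a
σ-finite measure `P` and any measurable `ψ` with finite associated integrals,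
`ln ∫ e^ψ p dP + ln ∫ e^{-ψ} q dP ≥ 2 ln ∫ √(p q) dP`, with equality at
`ψ = ½ ln(q/p)`; consequently the infimum of the left-hand side over any family of
measurable functions (with finite integrals) containing `½ ln(q/p)` equals
`2 ln ∫ √(p q) dP`. -/
theorem log_mgf_sum_ge_two_log_hellinger {Ω : Type*} [MeasurableSpace Ω] (P : Measure Ω)
    [SigmaFinite P]
    (p q : Ω → ℝ) (hpm : Measurable p) (hqm : Measurable q)
    (hp0 : ∀ᵐ ω ∂P, 0 < p ω) (hq0 : ∀ᵐ ω ∂P, 0 < q ω)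
    (hp1 : ∫ ω, p ω ∂P = 1) (hq1 : ∫ ω, q ω ∂P = 1) :
    (∀ ψ : Ω → ℝ, Measurable ψ →
        Integrable (fun ω => Real.exp (ψ ω) * p ω) P →
        Integrable (fun ω => Real.exp (-ψ ω) * q ω) P →
        2 * Real.log (∫ ω, Real.sqrt (p ω * q ω) ∂P) ≤
          Real.log (∫ ω, Real.exp (ψ ω) * p ω ∂P) +
            Real.log (∫ ω, Real.exp (-ψ ω) * q ω ∂P)) ∧
    (Real.log (∫ ω, Real.exp ((1 / 2) * Real.log (q ω / p ω)) * p ω ∂P) +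
        Real.log (∫ ω, Real.exp (-((1 / 2) * Real.log (q ω / p ω))) * q ω ∂P) =
      2 * Real.log (∫ ω, Real.sqrt (p ω * q ω) ∂P)) ∧
    (∀ F : Set (Ω → ℝ),
        (∀ ψ ∈ F, Measurable ψ ∧
            Integrable (fun ω => Real.exp (ψ ω) * p ω) P ∧
            Integrable (fun ω => Real.exp (-ψ ω) * q ω) P) →
        (fun ω => (1 / 2) * Real.log (q ω / p ω)) ∈ F →
        sInf {v | ∃ ψ ∈ F,
            v = Real.log (∫ ω, Real.exp (ψ ω) * p ω ∂P) +
                Real.log (∫ ω, Real.exp (-ψ ω) * q ω ∂P)} =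
          2 * Real.log (∫ ω, Real.sqrt (p ω * q ω) ∂P)) := by
  set I : ℝ := ∫ ω, Real.sqrt (p ω * q ω) ∂P with hIdef
  -- integrability of p and q
  have hp_int : Integrable p P := by
    by_contra h; rw [integral_undef h] at hp1; norm_num at hp1
  have hq_int : Integrable q P := by
    by_contra h; rw [integral_undef h] at hq1; norm_num at hq1
  -- integrability of √(p q)
  have hI_int : Integrable (fun ω => Real.sqrt (p ω * q ω)) P := by
    refine Integrable.mono' ((hp_int.add hq_int).div_const 2)
      ((hpm.mul hqm).sqrt.aestronglyMeasurable) ?_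
    filter_upwards [hp0, hq0] with ω hp hq
    rw [Real.norm_of_nonneg (Real.sqrt_nonneg _)]
    have h1 : Real.sqrt (p ω * q ω) = Real.sqrt (p ω) * Real.sqrt (q ω) :=
      Real.sqrt_mul hp.le _
    have h2 := Real.sq_sqrt hp.le
    have h3 := Real.sq_sqrt hq.le
    have h4 := sq_nonneg (Real.sqrt (p ω) - Real.sqrt (q ω))
    simp only [Pi.add_apply]
    nlinarith
  -- positivity of I
  have hI_pos : 0 < I := by
    rw [hIdef, integral_pos_iff_support_of_nonneg_ae
      (Filter.Eventually.of_forall fun ω => Real.sqrt_nonneg _) hI_int]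
    have hsupp : ∀ᵐ ω ∂P, ω ∈ Function.support fun ω => Real.sqrt (p ω * q ω) := by
      filter_upwards [hp0, hq0] with ω hp hq
      simp only [Function.mem_support]
      positivity
    by_contra h
    push_neg at h
    have h0 : P (Function.support fun ω => Real.sqrt (p ω * q ω)) = 0 := le_antisymm h bot_le
    have hcompl : P (Function.support fun ω => Real.sqrt (p ω * q ω))ᶜ = 0 := hsupp
    have : P Set.univ = 0 := by
      refine le_antisymm ?_ zero_le
      calc P Set.univ ≤ P (Function.support fun ω => Real.sqrt (p ω * q ω)) +
          P (Function.support fun ω => Real.sqrt (p ω * q ω))ᶜ := by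
            rw [← Set.union_compl_self (Function.support fun ω => Real.sqrt (p ω * q ω))]; exact measure_union_le _ _
        _ = 0 := by rw [h0, hcompl, add_zero]
    have hP0 : P = 0 := Measure.measure_univ_eq_zero.mp this
    rw [hP0] at hp1
    simp at hp1
  -- Part 1: the inequality
  have main : ∀ ψ : Ω → ℝ,
      Integrable (fun ω => Real.exp (ψ ω) * p ω) P →
      Integrable (fun ω => Real.exp (-ψ ω) * q ω) P →
      2 * Real.log I ≤
        Real.log (∫ ω, Real.exp (ψ ω) * p ω ∂P) +
          Real.log (∫ ω, Real.exp (-ψ ω) * q ω ∂P) := by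
    intro ψ hA hB
    set A : ℝ := ∫ ω, Real.exp (ψ ω) * p ω ∂P with hAdef
    set B : ℝ := ∫ ω, Real.exp (-ψ ω) * q ω ∂P with hBdef
    set f : Ω → ℝ := fun ω => Real.sqrt (Real.exp (ψ ω) * p ω) with hfdef
    set g : Ω → ℝ := fun ω => Real.sqrt (Real.exp (-ψ ω) * q ω) with hgdef
    have hfm : AEStronglyMeasurable f P :=
      (Real.continuous_sqrt.comp_aestronglyMeasurable hA.aestronglyMeasurable)
    have hgm : AEStronglyMeasurable g P :=
      (Real.continuous_sqrt.comp_aestronglyMeasurable hB.aestronglyMeasurable)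
    have hfsq : Integrable (fun ω => f ω ^ 2) P := by
      refine hA.congr ?_
      filter_upwards [hp0] with ω hp
      rw [hfdef]; exact (Real.sq_sqrt (by positivity)).symm
    have hgsq : Integrable (fun ω => g ω ^ 2) P := by
      refine hB.congr ?_
      filter_upwards [hq0] with ω hq
      rw [hgdef]; exact (Real.sq_sqrt (by positivity)).symm
    have hfL2 : MemLp f (ENNReal.ofReal 2) P := by
      rw [show ENNReal.ofReal 2 = 2 by norm_num]
      exact (memLp_two_iff_integrable_sq hfm).2 hfsq
    have hgL2 : MemLp g (ENNReal.ofReal 2) P := by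
      rw [show ENNReal.ofReal 2 = 2 by norm_num]
      exact (memLp_two_iff_integrable_sq hgm).2 hgsq
    have hconj : Real.HolderConjugate 2 2 := Real.HolderConjugate.two_two
    have hCS := integral_mul_le_Lp_mul_Lq_of_nonneg hconj
      (Filter.Eventually.of_forall fun ω => Real.sqrt_nonneg _)
      (Filter.Eventually.of_forall fun ω => Real.sqrt_nonneg _) hfL2 hgL2
    -- rewrite real powers as natural powers
    have hrpow : ∀ x : ℝ, x ^ (2:ℝ) = x ^ (2:ℕ) := fun x => by
      rw [show (2:ℝ) = ((2:ℕ):ℝ) by norm_num, Real.rpow_natCast]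
    simp only [hrpow] at hCS
    -- identify the left side with I
    have hfg : ∫ ω, f ω * g ω ∂P = I := by
      rw [hIdef]
      refine integral_congr_ae ?_
      filter_upwards [hp0, hq0] with ω hp hq
      rw [hfdef, hgdef, ← Real.sqrt_mul (by positivity)]
      congr 1
      rw [Real.exp_neg]
      have := Real.exp_pos (ψ ω)
      field_simp
    have hfA : ∫ ω, f ω ^ (2:ℕ) ∂P = A := by
      rw [hAdef]
      refine integral_congr_ae ?_
      filter_upwards [hp0] with ω hp
      rw [hfdef]; exact Real.sq_sqrt (by positivity)
    have hgB : ∫ ω, g ω ^ (2:ℕ) ∂P = B := by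
      rw [hBdef]
      refine integral_congr_ae ?_
      filter_upwards [hq0] with ω hq
      rw [hgdef]; exact Real.sq_sqrt (by positivity)
    rw [hfg, hfA, hgB] at hCS
    have hA0 : 0 ≤ A := by
      rw [hAdef]
      refine integral_nonneg_of_ae ?_
      filter_upwards [hp0] with ω hp; positivity
    have hB0 : 0 ≤ B := by
      rw [hBdef]
      refine integral_nonneg_of_ae ?_
      filter_upwards [hq0] with ω hq; positivity
    rw [← Real.sqrt_eq_rpow, ← Real.sqrt_eq_rpow] at hCS
    have hABpos : 0 < Real.sqrt A * Real.sqrt B := lt_of_lt_of_le hI_pos hCS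
    have hApos : 0 < A := by
      rcases mul_pos_iff.mp hABpos with ⟨h1, _⟩ | ⟨h1, _⟩
      · exact Real.sqrt_pos.mp h1
      · exact absurd h1 (not_lt.mpr (Real.sqrt_nonneg _))
    have hBpos : 0 < B := by
      rcases mul_pos_iff.mp hABpos with ⟨_, h2⟩ | ⟨_, h2⟩
      · exact Real.sqrt_pos.mp h2
      · exact absurd h2 (not_lt.mpr (Real.sqrt_nonneg _))
    have hsq : I ^ 2 ≤ A * B := by
      calc I ^ 2 ≤ (Real.sqrt A * Real.sqrt B) ^ 2 := by
            exact pow_le_pow_left₀ hI_pos.le hCS 2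
        _ = A * B := by
            rw [mul_pow, Real.sq_sqrt hA0, Real.sq_sqrt hB0]
    calc 2 * Real.log I = Real.log (I ^ 2) := by
          rw [Real.log_pow]; norm_num
      _ ≤ Real.log (A * B) := Real.log_le_log (by positivity) hsq
      _ = Real.log A + Real.log B := Real.log_mul hApos.ne' hBpos.ne'
  -- the equality at ψ₀ = ½ log (q/p)
  have heqA : ∫ ω, Real.exp ((1 / 2) * Real.log (q ω / p ω)) * p ω ∂P = I := by
    rw [hIdef]
    refine integral_congr_ae ?_
    filter_upwards [hp0, hq0] with ω hp hq
    exact aux_exp_half_log hp hq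
  have heqB : ∫ ω, Real.exp (-((1 / 2) * Real.log (q ω / p ω))) * q ω ∂P = I := by
    rw [hIdef]
    refine integral_congr_ae ?_
    filter_upwards [hp0, hq0] with ω hp hq
    exact aux_exp_neg_half_log hp hq
  have heq : Real.log (∫ ω, Real.exp ((1 / 2) * Real.log (q ω / p ω)) * p ω ∂P) +
      Real.log (∫ ω, Real.exp (-((1 / 2) * Real.log (q ω / p ω))) * q ω ∂P) =
      2 * Real.log I := by
    rw [heqA, heqB]; ring
  refine ⟨fun ψ _ hA hB => main ψ hA hB, heq, ?_⟩
  -- Part 3: the infimum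
  intro F hF hmem
  have hmemS : 2 * Real.log I ∈ {v | ∃ ψ ∈ F,
      v = Real.log (∫ ω, Real.exp (ψ ω) * p ω ∂P) +
          Real.log (∫ ω, Real.exp (-ψ ω) * q ω ∂P)} :=
    ⟨_, hmem, heq.symm⟩
  have hlb : ∀ v ∈ {v | ∃ ψ ∈ F,
      v = Real.log (∫ ω, Real.exp (ψ ω) * p ω ∂P) +
          Real.log (∫ ω, Real.exp (-ψ ω) * q ω ∂P)}, 2 * Real.log I ≤ v := by
    rintro v ⟨ψ, hψF, rfl⟩
    obtain ⟨-, hA, hB⟩ := hF ψ hψF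
    exact main ψ hA hB
  exact le_antisymm (csInf_le ⟨2 * Real.log I, hlb⟩ hmemS) (le_csInf ⟨_, hmemS⟩ hlb)
end

section
/- Let (Ω,P) be a measure space with σ-finite measure P and let p, q be probability densities w.r.t. P. Setting a = ∫_Ω min[p(ω), q(ω)] P(dω), one has ∫_Ω √(p(ω) q(ω)) P(dω) ≤ √(a (2 − a)). -/
open MeasureTheory

/-- For probability densities `p`, `q` w.r.t. a σ-finite measure `P`,
writing `a = ∫ min(p,q) dP`, one has `∫ √(p q) dP ≤ √(a (2 - a))`. -/
theorem hellinger_affinity_le_sqrt {Ω : Type*} [MeasurableSpace Ω] (P : Measure Ω)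
    [SigmaFinite P]
    (p q : Ω → ℝ) (hpm : Measurable p) (hqm : Measurable q)
    (hp0 : ∀ ω, 0 ≤ p ω) (hq0 : ∀ ω, 0 ≤ q ω)
    (hp1 : ∫ ω, p ω ∂P = 1) (hq1 : ∫ ω, q ω ∂P = 1)
    (a : ℝ) (ha : a = ∫ ω, min (p ω) (q ω) ∂P) :
    ∫ ω, Real.sqrt (p ω * q ω) ∂P ≤ Real.sqrt (a * (2 - a)) := by
  have hpint : Integrable p P := by
    by_contra h
    rw [integral_undef h] at hp1
    norm_num at hp1
  have hqint : Integrable q P := by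
    by_contra h
    rw [integral_undef h] at hq1
    norm_num at hq1
  have hminm : Measurable fun ω => min (p ω) (q ω) := hpm.min hqm
  have hmaxm : Measurable fun ω => max (p ω) (q ω) := hpm.max hqm
  have hmin_int : Integrable (fun ω => min (p ω) (q ω)) P := by
    refine hpint.mono hminm.aestronglyMeasurable (ae_of_all _ fun ω => ?_)
    rw [Real.norm_of_nonneg (le_min (hp0 ω) (hq0 ω)), Real.norm_of_nonneg (hp0 ω)]
    exact min_le_left _ _
  have hpq_int : Integrable (fun ω => p ω + q ω) P := hpint.add hqint
  have hmax_int : Integrable (fun ω => max (p ω) (q ω)) P := by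
    refine hpq_int.mono hmaxm.aestronglyMeasurable (ae_of_all _ fun ω => ?_)
    rw [Real.norm_of_nonneg (le_max_of_le_left (hp0 ω)),
      Real.norm_of_nonneg (add_nonneg (hp0 ω) (hq0 ω))]
    exact max_le (le_add_of_nonneg_right (hq0 ω)) (le_add_of_nonneg_left (hp0 ω))
  have hmax : ∫ ω, max (p ω) (q ω) ∂P = 2 - a := by
    have : ∀ ω, max (p ω) (q ω) = p ω + q ω - min (p ω) (q ω) := fun ω => by
      rcases le_total (p ω) (q ω) with h | h <;> simp [min_eq_left, max_eq_right, h] <;> ring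
    rw [integral_congr_ae (ae_of_all _ this), integral_sub hpq_int hmin_int,
      integral_add hpint hqint, hp1, hq1, ha]
    ring
  have ha0 : 0 ≤ a := by
    rw [ha]
    exact integral_nonneg fun ω => le_min (hp0 ω) (hq0 ω)
  have ha2 : 0 ≤ 2 - a := by
    rw [← hmax]
    exact integral_nonneg fun ω => le_max_of_le_left (hp0 ω)
  set f := fun ω => Real.sqrt (min (p ω) (q ω)) with hf
  set g := fun ω => Real.sqrt (max (p ω) (q ω)) with hg
  have hfm : Measurable f := hminm.sqrt
  have hgm : Measurable g := hmaxm.sqrt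
  have hf2 : ∀ ω, f ω ^ (2:ℝ) = min (p ω) (q ω) := fun ω => by
    rw [Real.rpow_two, Real.sq_sqrt (le_min (hp0 ω) (hq0 ω))]
  have hg2 : ∀ ω, g ω ^ (2:ℝ) = max (p ω) (q ω) := fun ω => by
    rw [Real.rpow_two, Real.sq_sqrt (le_max_of_le_left (hp0 ω))]
  have hfL2 : MemLp f (ENNReal.ofReal 2) P := by
    rw [show ENNReal.ofReal 2 = 2 by norm_num]
    refine (memLp_two_iff_integrable_sq hfm.aestronglyMeasurable).2 ?_
    refine hmin_int.congr (ae_of_all _ fun ω => ?_)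
    exact (Real.sq_sqrt (le_min (hp0 ω) (hq0 ω))).symm
  have hgL2 : MemLp g (ENNReal.ofReal 2) P := by
    rw [show ENNReal.ofReal 2 = 2 by norm_num]
    refine (memLp_two_iff_integrable_sq hgm.aestronglyMeasurable).2 ?_
    refine hmax_int.congr (ae_of_all _ fun ω => ?_)
    exact (Real.sq_sqrt (le_max_of_le_left (hp0 ω))).symm
  have key := integral_mul_le_Lp_mul_Lq_of_nonneg (⟨by norm_num, by norm_num, by norm_num⟩ :
    Real.HolderConjugate 2 2) (ae_of_all _ fun ω => Real.sqrt_nonneg _)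
    (ae_of_all _ fun ω => Real.sqrt_nonneg _) hfL2 hgL2
  have hfg : ∀ ω, f ω * g ω = Real.sqrt (p ω * q ω) := fun ω => by
    rw [← Real.sqrt_mul (le_min (hp0 ω) (hq0 ω))]
    congr 1
    rcases le_total (p ω) (q ω) with h | h <;> simp [min_eq_left, max_eq_right, h] <;> ring
  calc ∫ ω, Real.sqrt (p ω * q ω) ∂P = ∫ ω, f ω * g ω ∂P := by
        exact integral_congr_ae (ae_of_all _ fun ω => (hfg ω).symm)
    _ ≤ (∫ ω, f ω ^ (2:ℝ) ∂P) ^ ((1:ℝ)/2) * (∫ ω, g ω ^ (2:ℝ) ∂P) ^ ((1:ℝ)/2) := key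
    _ = Real.sqrt (a * (2 - a)) := by
        rw [integral_congr_ae (ae_of_all _ hf2), integral_congr_ae (ae_of_all _ hg2),
          ← ha, hmax, ← Real.sqrt_eq_rpow, ← Real.sqrt_eq_rpow, ← Real.sqrt_mul ha0]
end

section
/- Let (Ω,P) be a measure space with σ-finite measure P, let p, q be probability densities w.r.t. P, let ε ∈ (0,1/2), let K̄ be a positive integer, and let a < b be reals with r = ½(b − a). Denote by p^{K̄}, q^{K̄} the K̄-fold product densities on Ω^{K̄} w.r.t. P^{K̄}. If there exists a Borel function ĝ : Ω^{K̄} → ℝ such that the q^{K̄}-probability of {|ĝ(ω^{K̄}) − b| ≥ r} is at most ε and the p^{K̄}-probability of {|ĝ(ω^{K̄}) − a| ≥ r} is at most ε, then (∫_Ω √(p(ω) q(ω)) P(dω))^{K̄} ≤ 2 √(ε(1−ε)). -/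
open MeasureTheory
open scoped ENNReal NNReal

lemma scalar_hellinger (ε x y : ℝ) (hε : 0 < ε) (hε2 : ε ≤ 1/2)
    (hx0 : 0 ≤ x) (hx1 : x ≤ 1) (hy0 : 0 ≤ y) (hy1 : y ≤ 1)
    (hxε : 1 - x ≤ ε) (hyε : y ≤ ε) :
    Real.sqrt (x*y) + Real.sqrt ((1-x)*(1-y)) ≤ 2 * Real.sqrt (ε*(1-ε)) := by
  set s := Real.sqrt (x*y) with hsdef
  set t := Real.sqrt ((1-x)*(1-y)) with htdef
  set u := Real.sqrt (ε*(1-ε)) with hudef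
  have hs0 : 0 ≤ s := Real.sqrt_nonneg _
  have ht0 : 0 ≤ t := Real.sqrt_nonneg _
  have hu0 : 0 ≤ u := Real.sqrt_nonneg _
  have hs2 : s^2 = x*y := Real.sq_sqrt (mul_nonneg hx0 hy0)
  have ht2 : t^2 = (1-x)*(1-y) := Real.sq_sqrt (mul_nonneg (by linarith) (by linarith))
  have hu2 : u^2 = ε*(1-ε) := Real.sq_sqrt (mul_nonneg hε.le (by linarith))
  have hxq : x*(1-x) ≤ ε*(1-ε) := by nlinarith
  have hyq : y*(1-y) ≤ ε*(1-ε) := by nlinarith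
  have hst : s*t ≤ u^2 := by
    have h1 : (s*t)^2 ≤ (u^2)^2 := by
      have : (s*t)^2 = (x*(1-x))*(y*(1-y)) := by rw [mul_pow, hs2, ht2]; ring
      rw [this]
      calc (x*(1-x))*(y*(1-y)) ≤ (ε*(1-ε))*(ε*(1-ε)) :=
            mul_le_mul hxq hyq (mul_nonneg hy0 (by linarith)) (mul_nonneg hε.le (by linarith))
        _ = (u^2)^2 := by rw [hu2]; ring
    nlinarith [mul_nonneg hs0 ht0, sq_nonneg u]
  have hsum : s^2 + t^2 ≤ 2*u^2 := by
    rw [hs2, ht2, hu2]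
    nlinarith [mul_nonneg (by linarith : (0:ℝ) ≤ x - (1-ε)) (by linarith : (0:ℝ) ≤ 1 - 2*y),
      mul_nonneg (by linarith : (0:ℝ) ≤ ε - y) (by linarith : (0:ℝ) ≤ 1 - 2*ε)]
  nlinarith [sq_nonneg (s + t - 2*u)]

lemma lintegral_prod_ofReal {Ω : Type*} [MeasurableSpace Ω] (P : Measure Ω) [SigmaFinite P]
    (K : ℕ) (f : Ω → ℝ) (h0 : ∀ ω, 0 ≤ f ω) (hi : Integrable f P) :
    ∫⁻ y, ENNReal.ofReal (∏ k, f (y k)) ∂(Measure.pi fun _ : Fin K => P)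
      = ENNReal.ofReal ((∫ ω, f ω ∂P) ^ K) := by
  letI : MeasureSpace Ω := ⟨P⟩
  haveI : SigmaFinite (volume : Measure Ω) := ‹SigmaFinite P›
  have hμ : (Measure.pi fun _ : Fin K => P) = (volume : Measure (Fin K → Ω)) := rfl
  have hint : Integrable (fun y : Fin K → Ω => ∏ k, f (y k))
      (Measure.pi fun _ : Fin K => P) := by
    rw [hμ]; exact Integrable.fintype_prod (f := fun _ : Fin K => f) (fun _ => hi)
  rw [← ofReal_integral_eq_lintegral_ofReal hint
      (Filter.Eventually.of_forall fun y => Finset.prod_nonneg fun k _ => h0 (y k))]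
  congr 1
  rw [hμ]
  simpa [← hμ] using MeasureTheory.integral_fintype_prod_eq_pow (ι := Fin K) f (μ := P)

/-- If some Borel estimate `ghat` of a quantity taking value `a` under the
density `p` and value `b` under the density `q` recovers it within accuracy
`r = (b-a)/2` with confidence `1 - ε` from `K̄` i.i.d. observations, then the Hellinger
affinity satisfies `(∫ √(p q) dP)^K̄ ≤ 2√(ε(1-ε))`. -/
theorem hellinger_bound_of_reliable_estimate {Ω : Type*} [MeasurableSpace Ω]
    (P : Measure Ω) [SigmaFinite P]
    (p q : Ω → ℝ) (hpm : Measurable p) (hqm : Measurable q)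
    (hp0 : ∀ ω, 0 ≤ p ω) (hq0 : ∀ ω, 0 ≤ q ω)
    (hp1 : ∫ ω, p ω ∂P = 1) (hq1 : ∫ ω, q ω ∂P = 1)
    (ε : ℝ) (hε : 0 < ε) (hε2 : ε < 1 / 2)
    (K : ℕ) (hK : 0 < K) (a b : ℝ) (hab : a < b) (r : ℝ) (hr : r = (b - a) / 2)
    (ghat : (Fin K → Ω) → ℝ) (hghat : Measurable ghat)
    (h1 : prodDensityMeasure P K q {y | r ≤ |ghat y - b|} ≤ ENNReal.ofReal ε)
    (h2 : prodDensityMeasure P K p {y | r ≤ |ghat y - a|} ≤ ENNReal.ofReal ε) :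
    (∫ ω, Real.sqrt (p ω * q ω) ∂P) ^ K ≤ 2 * Real.sqrt (ε * (1 - ε)) := by
  classical
  have hpint : Integrable p P := by
    by_contra hc; rw [integral_undef hc] at hp1; norm_num at hp1
  have hqint : Integrable q P := by
    by_contra hc; rw [integral_undef hc] at hq1; norm_num at hq1
  set h : Ω → ℝ := fun ω => Real.sqrt (p ω * q ω) with hhdef
  have hhm : Measurable h := (hpm.mul hqm).sqrt
  have hh0 : ∀ ω, 0 ≤ h ω := fun ω => Real.sqrt_nonneg _
  have hhint : Integrable h P := by
    refine Integrable.mono (hpint.add hqint) hhm.aestronglyMeasurable ?_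
    refine Filter.Eventually.of_forall fun ω => ?_
    simp only [Pi.add_apply]
    rw [Real.norm_of_nonneg (hh0 ω), Real.norm_of_nonneg (add_nonneg (hp0 ω) (hq0 ω))]
    have hs2 : (h ω)^2 = p ω * q ω := Real.sq_sqrt (mul_nonneg (hp0 ω) (hq0 ω))
    nlinarith [hh0 ω, hp0 ω, hq0 ω, sq_nonneg (p ω - q ω), sq_nonneg (p ω + q ω)]
  set μ := Measure.pi (fun _ : Fin K => P) with hμdef
  set F : (Fin K → Ω) → ℝ := fun y => ∏ k, p (y k) with hFdef
  set G : (Fin K → Ω) → ℝ := fun y => ∏ k, q (y k) with hGdef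
  have hFm : Measurable F := Finset.measurable_prod _ fun k _ => hpm.comp (measurable_pi_apply k)
  have hGm : Measurable G := Finset.measurable_prod _ fun k _ => hqm.comp (measurable_pi_apply k)
  have hF0 : ∀ y, 0 ≤ F y := fun y => Finset.prod_nonneg fun k _ => hp0 _
  have hG0 : ∀ y, 0 ≤ G y := fun y => Finset.prod_nonneg fun k _ => hq0 _
  set A : Set (Fin K → Ω) := {y | r ≤ |ghat y - a|}ᶜ with hAdef
  have hAsm : MeasurableSet {y | r ≤ |ghat y - a|} :=
    measurableSet_le measurable_const (hghat.sub measurable_const).abs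
  have hAm : MeasurableSet A := hAsm.compl
  -- total masses
  have hμp_univ : prodDensityMeasure P K p Set.univ = 1 := by
    rw [prodDensityMeasure, withDensity_apply _ MeasurableSet.univ, Measure.restrict_univ,
      lintegral_prod_ofReal P K p hp0 hpint, hp1]
    simp
  have hμq_univ : prodDensityMeasure P K q Set.univ = 1 := by
    rw [prodDensityMeasure, withDensity_apply _ MeasurableSet.univ, Measure.restrict_univ,
      lintegral_prod_ofReal P K q hq0 hqint, hq1]
    simp
  -- pointwise identity
  have hpoint : ∀ y : Fin K → Ω, ENNReal.ofReal (∏ k, h (y k))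
      = (ENNReal.ofReal (F y)) ^ (1/2 : ℝ) * (ENNReal.ofReal (G y)) ^ (1/2 : ℝ) := by
    intro y
    have h1' : ∏ k, h (y k) = (F y * G y) ^ (1/2 : ℝ) := by
      simp only [hhdef, Real.sqrt_eq_rpow]
      rw [Real.finset_prod_rpow _ _ (fun k _ => mul_nonneg (hp0 _) (hq0 _)),
        Finset.prod_mul_distrib]
    rw [h1', ← ENNReal.ofReal_rpow_of_nonneg (mul_nonneg (hF0 y) (hG0 y)) (by norm_num),
      ENNReal.ofReal_mul (hF0 y), ENNReal.mul_rpow_of_nonneg _ _ (by norm_num)]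
  -- Cauchy-Schwarz on a measurable set
  have hCS : ∀ S : Set (Fin K → Ω), MeasurableSet S →
      ∫⁻ y in S, ENNReal.ofReal (∏ k, h (y k)) ∂μ
        ≤ (prodDensityMeasure P K p S) ^ (1/2:ℝ) * (prodDensityMeasure P K q S) ^ (1/2:ℝ) := by
    intro S hS
    have hconj : (2:ℝ).HolderConjugate 2 := Real.HolderConjugate.two_two
    have hhalf : ∀ x : ℝ≥0∞, (x ^ (1/2:ℝ)) ^ (2:ℝ) = x := fun x => by
      rw [← ENNReal.rpow_mul]; norm_num
    calc ∫⁻ y in S, ENNReal.ofReal (∏ k, h (y k)) ∂μ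
        = ∫⁻ y in S, ((fun y => (ENNReal.ofReal (F y)) ^ (1/2:ℝ)) *
            (fun y => (ENNReal.ofReal (G y)) ^ (1/2:ℝ))) y ∂μ := by
          refine lintegral_congr fun y => ?_
          simp only [Pi.mul_apply]
          exact hpoint y
      _ ≤ (∫⁻ y in S, ((ENNReal.ofReal (F y)) ^ (1/2:ℝ)) ^ (2:ℝ) ∂μ) ^ (1/(2:ℝ)) *
          (∫⁻ y in S, ((ENNReal.ofReal (G y)) ^ (1/2:ℝ)) ^ (2:ℝ) ∂μ) ^ (1/(2:ℝ)) :=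
          ENNReal.lintegral_mul_le_Lp_mul_Lq _ hconj
            (hFm.ennreal_ofReal.pow measurable_const).aemeasurable
            (hGm.ennreal_ofReal.pow measurable_const).aemeasurable
      _ = (prodDensityMeasure P K p S) ^ (1/2:ℝ) * (prodDensityMeasure P K q S) ^ (1/2:ℝ) := by
          simp only [hhalf]
          rw [prodDensityMeasure, prodDensityMeasure, withDensity_apply _ hS,
            withDensity_apply _ hS]
  -- measure bounds
  set x1 := prodDensityMeasure P K p A with hx1def
  set x2 := prodDensityMeasure P K p Aᶜ with hx2def
  set y1 := prodDensityMeasure P K q A with hy1def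
  set y2 := prodDensityMeasure P K q Aᶜ with hy2def
  have hx12 : x1 + x2 = 1 := by
    rw [hx1def, hx2def, measure_add_measure_compl hAm, hμp_univ]
  have hy12 : y1 + y2 = 1 := by
    rw [hy1def, hy2def, measure_add_measure_compl hAm, hμq_univ]
  have hx2ε : x2 ≤ ENNReal.ofReal ε := by
    have hAc : Aᶜ = {y | r ≤ |ghat y - a|} := compl_compl _
    rw [hx2def, hAc]; exact h2
  have hr0 : 0 < r := by rw [hr]; linarith
  have hy1ε : y1 ≤ ENNReal.ofReal ε := by
    refine le_trans (measure_mono ?_) h1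
    intro y hy
    simp only [hAdef, Set.mem_compl_iff, Set.mem_setOf_eq, not_le] at hy
    simp only [Set.mem_setOf_eq]
    have hba : b - a = 2 * r := by rw [hr]; ring
    have habs : ghat y - a < r := lt_of_le_of_lt (le_abs_self _) hy
    refine le_abs.mpr (Or.inr ?_)
    linarith
  have hx1top : x1 ≠ ⊤ := by
    intro hc; rw [hc] at hx12; simp at hx12
  have hx2top : x2 ≠ ⊤ := by
    intro hc; rw [hc] at hx12; simp at hx12
  have hy1top : y1 ≠ ⊤ := by
    intro hc; rw [hc] at hy12; simp at hy12
  have hy2top : y2 ≠ ⊤ := by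
    intro hc; rw [hc] at hy12; simp at hy12
  -- real versions
  have hxsum : x1.toReal + x2.toReal = 1 := by
    rw [← ENNReal.toReal_add hx1top hx2top, hx12, ENNReal.toReal_one]
  have hysum : y1.toReal + y2.toReal = 1 := by
    rw [← ENNReal.toReal_add hy1top hy2top, hy12, ENNReal.toReal_one]
  have hx2r : x2.toReal ≤ ε := ENNReal.toReal_le_of_le_ofReal hε.le hx2ε
  have hy1r : y1.toReal ≤ ε := ENNReal.toReal_le_of_le_ofReal hε.le hy1ε
  have hx1r0 : 0 ≤ x1.toReal := ENNReal.toReal_nonneg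
  have hx2r0 : 0 ≤ x2.toReal := ENNReal.toReal_nonneg
  have hy1r0 : 0 ≤ y1.toReal := ENNReal.toReal_nonneg
  have hy2r0 : 0 ≤ y2.toReal := ENNReal.toReal_nonneg
  -- the Hellinger bound in ℝ≥0∞
  have hH : ENNReal.ofReal ((∫ ω, h ω ∂P) ^ K) = ∫⁻ y, ENNReal.ofReal (∏ k, h (y k)) ∂μ :=
    (lintegral_prod_ofReal P K h hh0 hhint).symm
  have hbound : ENNReal.ofReal ((∫ ω, h ω ∂P) ^ K)
      ≤ x1^(1/2:ℝ) * y1^(1/2:ℝ) + x2^(1/2:ℝ) * y2^(1/2:ℝ) := by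
    rw [hH, ← lintegral_add_compl _ hAm]
    exact add_le_add (hCS A hAm) (hCS Aᶜ hAm.compl)
  -- bound the right side
  have hRtop : x1^(1/2:ℝ) * y1^(1/2:ℝ) + x2^(1/2:ℝ) * y2^(1/2:ℝ) ≠ ⊤ := by
    refine ENNReal.add_ne_top.mpr ⟨ENNReal.mul_ne_top ?_ ?_, ENNReal.mul_ne_top ?_ ?_⟩ <;>
      exact ENNReal.rpow_ne_top_of_nonneg (by norm_num) (by assumption)
  have hRle : x1^(1/2:ℝ) * y1^(1/2:ℝ) + x2^(1/2:ℝ) * y2^(1/2:ℝ)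
      ≤ ENNReal.ofReal (2 * Real.sqrt (ε * (1 - ε))) := by
    rw [ENNReal.le_ofReal_iff_toReal_le hRtop (by positivity)]
    have hmul1 : (x1^(1/2:ℝ) * y1^(1/2:ℝ)) ≠ ⊤ :=
      ENNReal.mul_ne_top (ENNReal.rpow_ne_top_of_nonneg (by norm_num) hx1top)
        (ENNReal.rpow_ne_top_of_nonneg (by norm_num) hy1top)
    have hmul2 : (x2^(1/2:ℝ) * y2^(1/2:ℝ)) ≠ ⊤ :=
      ENNReal.mul_ne_top (ENNReal.rpow_ne_top_of_nonneg (by norm_num) hx2top)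
        (ENNReal.rpow_ne_top_of_nonneg (by norm_num) hy2top)
    rw [ENNReal.toReal_add hmul1 hmul2, ENNReal.toReal_mul, ENNReal.toReal_mul,
      ← ENNReal.toReal_rpow, ← ENNReal.toReal_rpow, ← ENNReal.toReal_rpow,
      ← ENNReal.toReal_rpow, ← Real.sqrt_eq_rpow, ← Real.sqrt_eq_rpow,
      ← Real.sqrt_eq_rpow, ← Real.sqrt_eq_rpow,
      ← Real.sqrt_mul hx1r0, ← Real.sqrt_mul hx2r0]
    have hx2eq : x2.toReal = 1 - x1.toReal := by linarith
    have hy2eq : y2.toReal = 1 - y1.toReal := by linarith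
    rw [hx2eq, hy2eq]
    exact scalar_hellinger ε x1.toReal y1.toReal hε hε2.le hx1r0 (by linarith)
      hy1r0 (by linarith) (by linarith) hy1r
  have hfinal := le_trans hbound hRle
  rw [ENNReal.ofReal_le_ofReal_iff (by positivity)] at hfinal
  exact hfinal
end

section
/- Let (Ω,P) be a measure space with σ-finite measure P and {p_μ : μ ∈ M} probability densities w.r.t. P. Let B_1,…,B_b and R_1,…,R_r be nonempty subsets of M, K a positive integer, and suppose given measurable detectors φ_{ij} : Ω → ℝ and reals ε_{ij} ∈ (0,1), 1 ≤ i ≤ b, 1 ≤ j ≤ r, such that ∫_Ω e^{−φ_{ij}(ω)} p_μ(ω) P(dω) ≤ ε_{ij} for all μ ∈ B_i and ∫_Ω e^{φ_{ij}(ω)} p_ν(ω) P(dω) ≤ ε_{ij} for all ν ∈ R_j. Let E^{(K)} = [ε_{ij}^K] be the (entrywise positive) b×r matrix, let ε_K be its spectral norm, and let e = [g;h] > 0 be a Perron–Frobenius eigenvector of the symmetric matrix [[0, E^{(K)}],[(E^{(K)})^T, 0]], so that E^{(K)} h = ε_K g and (E^{(K)})^T g = ε_K h. Define ψ_{ij}(ω^K)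 = Σ_{t=1}^K φ_{ij}(ω_t) − ln(h_j/g_i), and let the test claim 'blue' on observation ω^K if there exists i ≤ b with ψ_{ij}(ω^K) ≥ 0 for all j ≤ r, and claim 'red' otherwise. Then for ω_1,…,ω_K drawn i.i.d. from p_μ: if μ ∈ B_1 ∪ … ∪ B_b the test claims 'blue' with probability at least 1 − ε_K, and if μ ∈ R_1 ∪ … ∪ R_r the test claims 'red' with probability at least 1 − ε_K. -/
open MeasureTheory ENNReal

lemma lintegral_pi_prod_const {Ω : Type*} [MeasurableSpace Ω] (P : Measure Ω) [SigmaFinite P] :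
    ∀ (K : ℕ) (f : Ω → ℝ≥0∞), Measurable f →
      ∫⁻ y : Fin K → Ω, ∏ t, f (y t) ∂(Measure.pi fun _ : Fin K => P) = (∫⁻ ω, f ω ∂P) ^ K := by
  intro K
  induction K with
  | zero =>
      intro f _
      simp [lintegral_const, Measure.pi_univ]
  | succ n ih =>
      intro f hf
      have hmp := measurePreserving_piFinSuccAbove (fun _ : Fin (n+1) => P) 0
      have hG : Measurable fun z : Ω × (Fin n → Ω) => f z.1 * ∏ t, f (z.2 t) := by
        apply Measurable.mul (hf.comp measurable_fst)
        exact Finset.measurable_prod _ fun t _ =>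
          hf.comp ((measurable_pi_apply t).comp measurable_snd)
      have key := hmp.lintegral_comp hG
      have : ∀ y : Fin (n+1) → Ω,
          (fun z : Ω × (Fin n → Ω) => f z.1 * ∏ t, f (z.2 t))
            ((MeasurableEquiv.piFinSuccAbove (fun _ => Ω) 0) y) = ∏ t, f (y t) := by
        intro y
        simp only [MeasurableEquiv.piFinSuccAbove]
        rw [Fin.prod_univ_succAbove (fun t => f (y t)) 0]
        rfl
      have hg2 : Measurable fun z : Fin n → Ω => ∏ t, f (z t) :=
        Finset.measurable_prod _ fun t _ => hf.comp (measurable_pi_apply t)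
      rw [show (fun y : Fin (n+1) → Ω => ∏ t, f (y t)) =
          fun y => (fun z : Ω × (Fin n → Ω) => f z.1 * ∏ t, f (z.2 t))
            ((MeasurableEquiv.piFinSuccAbove (fun _ => Ω) 0) y) from funext fun y => (this y).symm,
        key, lintegral_prod_mul hf.aemeasurable hg2.aemeasurable, ih f hf, pow_succ]
      ring

/-- Chernoff-type bound for the product-density measure. -/
lemma main_bound {Ω : Type*} [MeasurableSpace Ω] (P : Measure Ω) [SigmaFinite P]
    (p : Ω → ℝ) (hpm : Measurable p) (hp0 : ∀ ω, 0 ≤ p ω) (K : ℕ)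
    (θ : Ω → ℝ) (hθ : Measurable θ) (e c : ℝ) (he : 0 ≤ e) (hc : 0 < c)
    (hdet : ∫⁻ ω, ENNReal.ofReal (Real.exp (θ ω) * p ω) ∂P ≤ ENNReal.ofReal e) :
    prodDensityMeasure P K p {y | 0 ≤ (∑ t, θ (y t)) + Real.log c} ≤
      ENNReal.ofReal (c * e ^ K) := by
  set S : Set (Fin K → Ω) := {y | 0 ≤ (∑ t, θ (y t)) + Real.log c} with hS
  have hsum : Measurable fun y : Fin K → Ω => ∑ t, θ (y t) :=
    Finset.measurable_sum _ fun t _ => hθ.comp (measurable_pi_apply t)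
  have hSm : MeasurableSet S :=
    measurableSet_le measurable_const (hsum.add_const _)
  have h1 : prodDensityMeasure P K p S =
      ∫⁻ y in S, ENNReal.ofReal (∏ t, p (y t)) ∂(Measure.pi fun _ : Fin K => P) := by
    rw [prodDensityMeasure, withDensity_apply _ hSm]
  rw [h1]
  have h2 : ∫⁻ y in S, ENNReal.ofReal (∏ t, p (y t)) ∂(Measure.pi fun _ : Fin K => P) ≤
      ∫⁻ y, ENNReal.ofReal (c * ∏ t, Real.exp (θ (y t)) * p (y t))
        ∂(Measure.pi fun _ : Fin K => P) := by
    rw [← lintegral_indicator hSm]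
    apply lintegral_mono
    intro y
    rcases Classical.em (y ∈ S) with hy | hy
    · rw [Set.indicator_of_mem hy]
      apply ENNReal.ofReal_le_ofReal
      have hprod0 : 0 ≤ ∏ t, p (y t) := Finset.prod_nonneg fun t _ => hp0 _
      have hexp : (1:ℝ) ≤ c * Real.exp (∑ t, θ (y t)) := by
        have := hy
        rw [hS, Set.mem_setOf_eq] at this
        have h3 : (1:ℝ) ≤ Real.exp ((∑ t, θ (y t)) + Real.log c) := by
          rw [← Real.exp_zero]; exact Real.exp_le_exp.mpr this
        rwa [Real.exp_add, Real.exp_log hc, mul_comm] at h3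
      calc ∏ t, p (y t) = 1 * ∏ t, p (y t) := (one_mul _).symm
        _ ≤ (c * Real.exp (∑ t, θ (y t))) * ∏ t, p (y t) := by
            exact mul_le_mul_of_nonneg_right hexp hprod0
        _ = c * ∏ t, Real.exp (θ (y t)) * p (y t) := by
            rw [Real.exp_sum, mul_assoc, Finset.prod_mul_distrib]
    · rw [Set.indicator_of_notMem hy]; exact zero_le
  refine h2.trans ?_
  have h4 : ∀ y : Fin K → Ω,
      ENNReal.ofReal (c * ∏ t, Real.exp (θ (y t)) * p (y t)) =
        ENNReal.ofReal c * ∏ t, ENNReal.ofReal (Real.exp (θ (y t)) * p (y t)) := by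
    intro y
    rw [ENNReal.ofReal_mul hc.le, ENNReal.ofReal_prod_of_nonneg]
    intro t _
    exact mul_nonneg (Real.exp_pos _).le (hp0 _)
  simp only [h4]
  rw [lintegral_const_mul' _ _ ENNReal.ofReal_ne_top]
  have hmeas1 : Measurable fun ω => ENNReal.ofReal (Real.exp (θ ω) * p ω) :=
    ((Real.measurable_exp.comp hθ).mul hpm).ennreal_ofReal
  rw [lintegral_pi_prod_const P K _ hmeas1]
  calc ENNReal.ofReal c * (∫⁻ ω, ENNReal.ofReal (Real.exp (θ ω) * p ω) ∂P) ^ K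
      ≤ ENNReal.ofReal c * (ENNReal.ofReal e) ^ K := by
        exact mul_le_mul_right (pow_le_pow_left' hdet K) _
    _ = ENNReal.ofReal (c * e ^ K) := by
        rw [← ENNReal.ofReal_pow he, ← ENNReal.ofReal_mul hc.le]

/-- The "color inferring" test. Given detectors `φ i j` with risks
`ε i j ∈ (0,1)` for the pairs (blue set `B i`, red set `R j`), a Perron–Frobenius
eigenvector `[g; h] > 0` with eigenvalue `εK` of the matrix built from `ε i j ^ K`, and
shifted detectors `ψ i j (ω^K) = Σ_t φ i j (ω_t) − ln(h j / g i)`, the test claiming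
"blue" iff some row `i` has `ψ i j (ω^K) ≥ 0` for all `j` is correct with probability at
least `1 − εK` whenever the `K` observations are drawn i.i.d. from `p μ` with `μ` in the
union of the blue (resp. red) sets. -/
theorem color_inferring_test {Ω : Type*} [MeasurableSpace Ω] (P : Measure Ω)
    [SigmaFinite P] {m : ℕ} (M : Set (Fin m → ℝ)) (p : (Fin m → ℝ) → Ω → ℝ)
    (hpm : ∀ μ ∈ M, Measurable (p μ)) (hp0 : ∀ μ ∈ M, ∀ ω, 0 ≤ p μ ω)
    (hp1 : ∀ μ ∈ M, ∫ ω, p μ ω ∂P = 1)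
    {b r : ℕ} (hb : 0 < b) (hr : 0 < r)
    (B : Fin b → Set (Fin m → ℝ)) (R : Fin r → Set (Fin m → ℝ))
    (hBne : ∀ i, (B i).Nonempty) (hRne : ∀ j, (R j).Nonempty)
    (hBM : ∀ i, B i ⊆ M) (hRM : ∀ j, R j ⊆ M)
    (K : ℕ) (hK : 0 < K)
    (φ : Fin b → Fin r → Ω → ℝ) (hφ : ∀ i j, Measurable (φ i j))
    (ε : Fin b → Fin r → ℝ) (hε : ∀ i j, 0 < ε i j ∧ ε i j < 1)
    (hdet1 : ∀ i j, ∀ μ ∈ B i,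
      ∫⁻ ω, ENNReal.ofReal (Real.exp (-(φ i j ω)) * p μ ω) ∂P ≤ ENNReal.ofReal (ε i j))
    (hdet2 : ∀ i j, ∀ ν ∈ R j,
      ∫⁻ ω, ENNReal.ofReal (Real.exp (φ i j ω) * p ν ω) ∂P ≤ ENNReal.ofReal (ε i j))
    (g : Fin b → ℝ) (h : Fin r → ℝ) (hg : ∀ i, 0 < g i) (hh : ∀ j, 0 < h j)
    (εK : ℝ)
    (heig1 : ∀ i, ∑ j, ε i j ^ K * h j = εK * g i)
    (heig2 : ∀ j, ∑ i, ε i j ^ K * g i = εK * h j)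
    (ψ : Fin b → Fin r → (Fin K → Ω) → ℝ)
    (hψ : ∀ i j y, ψ i j y = (∑ t, φ i j (y t)) - Real.log (h j / g i)) :
    (∀ μ ∈ ⋃ i, B i,
      prodDensityMeasure P K (p μ) {y | ¬ ∃ i, ∀ j, 0 ≤ ψ i j y} ≤
        ENNReal.ofReal εK) ∧
    (∀ μ ∈ ⋃ j, R j,
      prodDensityMeasure P K (p μ) {y | ∃ i, ∀ j, 0 ≤ ψ i j y} ≤
        ENNReal.ofReal εK) := by
  constructor
  · rintro μ hμ
    rw [Set.mem_iUnion] at hμ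
    obtain ⟨i0, hi0⟩ := hμ
    have hμM : μ ∈ M := hBM i0 hi0
    -- subset of union over j
    have hsub : {y : Fin K → Ω | ¬ ∃ i, ∀ j, 0 ≤ ψ i j y} ⊆
        ⋃ j, {y | 0 ≤ (∑ t, -(φ i0 j (y t))) + Real.log (h j / g i0)} := by
      intro y hy
      simp only [Set.mem_setOf_eq, not_exists, not_forall] at hy
      obtain ⟨j, hj⟩ := hy i0
      rw [Set.mem_iUnion]
      refine ⟨j, ?_⟩
      rw [Set.mem_setOf_eq, Finset.sum_neg_distrib]
      rw [hψ] at hj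
      linarith [not_le.mp hj]
    refine le_trans (measure_mono hsub) ?_
    refine le_trans (measure_iUnion_le _) ?_
    have hbound : ∀ j, prodDensityMeasure P K (p μ)
        {y | 0 ≤ (∑ t, -(φ i0 j (y t))) + Real.log (h j / g i0)} ≤
        ENNReal.ofReal ((h j / g i0) * ε i0 j ^ K) := fun j =>
      main_bound P (p μ) (hpm μ hμM) (hp0 μ hμM) K (fun ω => -(φ i0 j ω))
        ((hφ i0 j).neg) (ε i0 j) (h j / g i0) (hε i0 j).1.le
        (div_pos (hh j) (hg i0)) (hdet1 i0 j μ hi0)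
    rw [tsum_fintype]
    calc ∑ j, prodDensityMeasure P K (p μ)
          {y | 0 ≤ (∑ t, -(φ i0 j (y t))) + Real.log (h j / g i0)}
        ≤ ∑ j, ENNReal.ofReal ((h j / g i0) * ε i0 j ^ K) :=
          Finset.sum_le_sum fun j _ => hbound j
      _ = ENNReal.ofReal (∑ j, (h j / g i0) * ε i0 j ^ K) :=
          (ENNReal.ofReal_sum_of_nonneg fun j _ =>
            mul_nonneg (div_pos (hh j) (hg i0)).le (pow_nonneg (hε i0 j).1.le K)).symm
      _ = ENNReal.ofReal εK := by
          congr 1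
          have hgi := (hg i0).ne'
          calc ∑ j, h j / g i0 * ε i0 j ^ K = (∑ j, ε i0 j ^ K * h j) / g i0 := by
                rw [Finset.sum_div]; exact Finset.sum_congr rfl fun j _ => by ring
            _ = εK := by rw [heig1 i0]; field_simp
  · rintro ν hν
    rw [Set.mem_iUnion] at hν
    obtain ⟨j0, hj0⟩ := hν
    have hνM : ν ∈ M := hRM j0 hj0
    have hsub : {y : Fin K → Ω | ∃ i, ∀ j, 0 ≤ ψ i j y} ⊆
        ⋃ i, {y | 0 ≤ (∑ t, φ i j0 (y t)) + Real.log (g i / h j0)} := by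
      intro y hy
      obtain ⟨i, hi⟩ := hy
      have hij := hi j0
      rw [hψ] at hij
      rw [Set.mem_iUnion]
      refine ⟨i, ?_⟩
      rw [Set.mem_setOf_eq]
      have hlog : Real.log (h j0 / g i) = -Real.log (g i / h j0) := by
        rw [← inv_div, Real.log_inv]
      rw [hlog] at hij
      linarith
    refine le_trans (measure_mono hsub) ?_
    refine le_trans (measure_iUnion_le _) ?_
    have hbound : ∀ i, prodDensityMeasure P K (p ν)
        {y | 0 ≤ (∑ t, φ i j0 (y t)) + Real.log (g i / h j0)} ≤
        ENNReal.ofReal ((g i / h j0) * ε i j0 ^ K) := fun i =>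
      main_bound P (p ν) (hpm ν hνM) (hp0 ν hνM) K (φ i j0)
        (hφ i j0) (ε i j0) (g i / h j0) (hε i j0).1.le
        (div_pos (hg i) (hh j0)) (hdet2 i j0 ν hj0)
    rw [tsum_fintype]
    calc ∑ i, prodDensityMeasure P K (p ν)
          {y | 0 ≤ (∑ t, φ i j0 (y t)) + Real.log (g i / h j0)}
        ≤ ∑ i, ENNReal.ofReal ((g i / h j0) * ε i j0 ^ K) :=
          Finset.sum_le_sum fun i _ => hbound i
      _ = ENNReal.ofReal (∑ i, (g i / h j0) * ε i j0 ^ K) :=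
          (ENNReal.ofReal_sum_of_nonneg fun i _ =>
            mul_nonneg (div_pos (hg i) (hh j0)).le (pow_nonneg (hε i j0).1.le K)).symm
      _ = ENNReal.ofReal εK := by
          congr 1
          have hhj := (hh j0).ne'
          calc ∑ i, g i / h j0 * ε i j0 ^ K = (∑ i, ε i j0 ^ K * g i) / h j0 := by
                rw [Finset.sum_div]; exact Finset.sum_congr rfl fun i _ => by ring
            _ = εK := by rw [heig2 j0]; field_simp
end

section
/- Let O = ((Ω,P), {p_μ : μ∈M}, F) be a good observation scheme, let M_1, M_2 be nonempty convex compact subsets of M, and let Opt = max_{μ∈M_1, ν∈M_2} ln(∫_Ω √(p_μ(ω) p_ν(ω)) P(dω)) (the maximum is attained), with optimal solution (μ_*, ν_*), ε_* = e^{Opt}, and detector φ_*(ω) = ½ ln(p_{μ_*}(ω)/p_{ν_*}(ω)). Then for every positive integer K: for every μ ∈ M_1, the probability under K i.i.d. draws ω_1,…,ω_K from p_μ that Σ_{t=1}^K φ_*(ω_t) < 0 is at most ε_*^K, and for every ν ∈ M_2, the probability under K i.i.d. draws from p_ν that Σ_{t=1}^K φ_*(ω_t) ≥ 0 is at most ε_*^K.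 In other words, the test which accepts hypothesis H_1 : μ ∈ M_1 when Σ_t φ_*(ω_t) ≥ 0 and accepts H_2 : μ ∈ M_2 otherwise has risk at most ε_*^K. -/
set_option maxHeartbeats 1000000


open MeasureTheory

/-- A *good observation scheme* `((Ω,P), {p_μ : μ ∈ M}, F)` in the sense of
Goldenshluger–Juditsky–Nemirovski: `Ω` is a Polish space carrying a σ-finite Borel
measure `P` of full support, `M ⊆ ℝ^m` is a convex relatively open set, each `p_μ`
(`μ ∈ M`) is a positive probability density w.r.t. `P`, jointly continuous in `(μ,ω)`,
and `F` is a finite-dimensional space of continuous functions containing the constants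
and all log-likelihood ratios, on which the function
`Φ(φ;μ) = ln ∫ e^{φ} p_μ dP` is real-valued and concave in `μ`. -/
structure GoodOS (Ω : Type) [TopologicalSpace Ω] [PolishSpace Ω] [MeasurableSpace Ω]
    [BorelSpace Ω] (m : ℕ) where
  P : Measure Ω
  sigmaFinite : SigmaFinite P
  full_support : ∀ U : Set Ω, IsOpen U → U.Nonempty → 0 < P U
  M : Set (Fin m → ℝ)
  M_convex : Convex ℝ M
  M_relatively_open : IsOpen (Subtype.val ⁻¹' M : Set (affineSpan ℝ M))
  p : (Fin m → ℝ) → Ω → ℝ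
  p_pos : ∀ μ ∈ M, ∀ ω : Ω, 0 < p μ ω
  p_cont : ContinuousOn (fun q : (Fin m → ℝ) × Ω => p q.1 q.2) (M ×ˢ Set.univ)
  p_prob : ∀ μ ∈ M, ∫ ω, p μ ω ∂P = 1
  F : Submodule ℝ (Ω → ℝ)
  F_finiteDimensional : FiniteDimensional ℝ F
  F_cont : ∀ φ ∈ F, Continuous φ
  F_const : ∀ c : ℝ, (fun _ : Ω => c) ∈ F
  F_logratio : ∀ μ ∈ M, ∀ ν ∈ M, (fun ω => Real.log (p μ ω / p ν ω)) ∈ F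
  mgf_integrable : ∀ φ ∈ F, ∀ μ ∈ M,
    Integrable (fun ω => Real.exp (φ ω) * p μ ω) P
  mgf_pos : ∀ φ ∈ F, ∀ μ ∈ M, 0 < ∫ ω, Real.exp (φ ω) * p μ ω ∂P
  mgf_concave : ∀ φ ∈ F,
    ConcaveOn ℝ M fun μ => Real.log (∫ ω, Real.exp (φ ω) * p μ ω ∂P)

/- ### Auxiliary elementary lemmas -/

private lemma exp_neg_half_log {a b : ℝ} (ha : 0 < a) (hb : 0 < b) :
    Real.exp (-(1/2) * Real.log (a / b)) * a = Real.sqrt (a * b) := by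
  have hab : 0 < a / b := div_pos ha hb
  set X := Real.exp (-(1/2) * Real.log (a/b)) with hXdef
  have hXpos : 0 < X := Real.exp_pos _
  have hX : X * X = b / a := by
    rw [hXdef, ← Real.exp_add, show -(1/2) * Real.log (a/b) + -(1/2) * Real.log (a/b)
      = - Real.log (a/b) by ring, Real.exp_neg, Real.exp_log hab, inv_div]
  have h2 : a * b = (X * a) * (X * a) := by
    have : (X * a) * (X * a) = (X * X) * (a * a) := by ring
    rw [this, hX]; field_simp
  rw [h2, Real.sqrt_mul_self (by positivity)]

private lemma exp_pos_half_log {a b : ℝ} (ha : 0 < a) (hb : 0 < b) :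
    Real.exp ((1/2) * Real.log (a / b)) * b = Real.sqrt (a * b) := by
  have hab : 0 < a / b := div_pos ha hb
  set X := Real.exp ((1/2) * Real.log (a/b)) with hXdef
  have hXpos : 0 < X := Real.exp_pos _
  have hX : X * X = a / b := by
    rw [hXdef, ← Real.exp_add, show (1/2) * Real.log (a/b) + (1/2) * Real.log (a/b)
      = Real.log (a/b) by ring, Real.exp_log hab]
  have h2 : a * b = (X * b) * (X * b) := by
    have : (X * b) * (X * b) = (X * X) * (b * b) := by ring
    rw [this, hX]; field_simp
  rw [h2, Real.sqrt_mul_self (by positivity)]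

private lemma sqrt_le_half_add {u v : ℝ} (hu : 0 ≤ u) (hv : 0 ≤ v) :
    Real.sqrt (u * v) ≤ (u + v) / 2 := by
  have h1 : u * v ≤ ((u + v) / 2) ^ 2 := by nlinarith [sq_nonneg (u - v)]
  calc Real.sqrt (u * v) ≤ Real.sqrt (((u + v) / 2) ^ 2) := Real.sqrt_le_sqrt h1
    _ = (u + v) / 2 := Real.sqrt_sq (by positivity)

private lemma log_combine {t bB bI bD L : ℝ} (ht0 : 0 < t) (ht1 : t ≤ 1)
    (h1 : bI ≤ L) (h2 : 2 * L ≤ bB + bI) (h3 : (1 - t) * bB + t * bD ≤ bI) : bD ≤ L := by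
  nlinarith [mul_nonneg (by linarith : (0:ℝ) ≤ 1 - t) (by linarith : (0:ℝ) ≤ bB + bI - 2 * L),
    mul_nonneg (by linarith : (0:ℝ) ≤ 2 - t) (by linarith : (0:ℝ) ≤ L - bI)]

private lemma integral_sqrt_le {α : Type*} [MeasurableSpace α] {P : Measure α} {f g h : α → ℝ}
    (hf : Integrable f P) (hg : Integrable g P) (hh : Integrable h P)
    (hf0 : ∀ ω, 0 ≤ f ω) (hg0 : ∀ ω, 0 ≤ g ω)
    (hhfg : ∀ ω, h ω = Real.sqrt (f ω * g ω))
    (hfpos : 0 < ∫ ω, f ω ∂P) (hgpos : 0 < ∫ ω, g ω ∂P) :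
    ∫ ω, h ω ∂P ≤ Real.sqrt ((∫ ω, f ω ∂P) * (∫ ω, g ω ∂P)) := by
  set A := ∫ ω, f ω ∂P
  set B := ∫ ω, g ω ∂P
  set lam := Real.sqrt B / Real.sqrt A with hlam
  have hApos : 0 < Real.sqrt A := Real.sqrt_pos.mpr hfpos
  have hBpos : 0 < Real.sqrt B := Real.sqrt_pos.mpr hgpos
  have hlampos : 0 < lam := div_pos hBpos hApos
  have hpw : ∀ ω, h ω ≤ (lam * f ω + g ω / lam) / 2 := by
    intro ω
    have : h ω = Real.sqrt ((lam * f ω) * (g ω / lam)) := by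
      rw [hhfg ω]; congr 1; field_simp
    rw [this]
    exact sqrt_le_half_add (mul_nonneg hlampos.le (hf0 ω)) (div_nonneg (hg0 ω) hlampos.le)
  have hint : Integrable (fun ω => (lam * f ω + g ω / lam) / 2) P := by
    apply Integrable.div_const
    exact ((hf.const_mul lam).add (hg.div_const lam))
  have hmono := integral_mono hh hint hpw
  have hcalc : ∫ ω, (lam * f ω + g ω / lam) / 2 ∂P = (lam * A + B / lam) / 2 := by
    rw [integral_div, integral_add (hf.const_mul lam) (hg.div_const lam),
      integral_const_mul, integral_div]
  rw [hcalc] at hmono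
  have : (lam * A + B / lam) / 2 = Real.sqrt (A * B) := by
    rw [Real.sqrt_mul hfpos.le]
    rw [hlam]
    have hA : Real.sqrt A * Real.sqrt A = A := Real.mul_self_sqrt hfpos.le
    have hB : Real.sqrt B * Real.sqrt B = B := Real.mul_self_sqrt hgpos.le
    field_simp
    nlinarith [hA, hB]
  linarith [hmono, this.ge]

/- ### Auxiliary lemmas about good observation schemes -/

private lemma mem_neghalf {Ω : Type} [TopologicalSpace Ω] [PolishSpace Ω] [MeasurableSpace Ω]
    [BorelSpace Ω] {m : ℕ} (O : GoodOS Ω m) {s r : Fin m → ℝ} (hs : s ∈ O.M) (hr : r ∈ O.M) :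
    (fun ω => -(1/2) * Real.log (O.p s ω / O.p r ω)) ∈ O.F := by
  have h := O.F.smul_mem ((-(1/2) : ℝ)) (O.F_logratio s hs r hr)
  have e : ((-(1/2) : ℝ) • fun ω => Real.log (O.p s ω / O.p r ω)) =
      fun ω => -(1/2) * Real.log (O.p s ω / O.p r ω) := by
    funext ω; simp [Pi.smul_apply, smul_eq_mul]
  rwa [e] at h

private lemma mem_poshalf {Ω : Type} [TopologicalSpace Ω] [PolishSpace Ω] [MeasurableSpace Ω]
    [BorelSpace Ω] {m : ℕ} (O : GoodOS Ω m) {s r : Fin m → ℝ} (hs : s ∈ O.M) (hr : r ∈ O.M) :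
    (fun ω => (1/2) * Real.log (O.p s ω / O.p r ω)) ∈ O.F := by
  have h := O.F.smul_mem (((1/2) : ℝ)) (O.F_logratio s hs r hr)
  have e : (((1/2) : ℝ) • fun ω => Real.log (O.p s ω / O.p r ω)) =
      fun ω => (1/2) * Real.log (O.p s ω / O.p r ω) := by
    funext ω; simp [Pi.smul_apply, smul_eq_mul]
  rwa [e] at h

private lemma sqrt_integral_eq {Ω : Type} [TopologicalSpace Ω] [PolishSpace Ω] [MeasurableSpace Ω]
    [BorelSpace Ω] {m : ℕ} (O : GoodOS Ω m) {s r : Fin m → ℝ} (hs : s ∈ O.M) (hr : r ∈ O.M) :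
    ∫ ω, Real.sqrt (O.p s ω * O.p r ω) ∂O.P
      = ∫ ω, Real.exp (-(1/2) * Real.log (O.p s ω / O.p r ω)) * O.p s ω ∂O.P :=
  integral_congr_ae (Filter.Eventually.of_forall fun ω =>
    (exp_neg_half_log (O.p_pos s hs ω) (O.p_pos r hr ω)).symm)

private lemma sqrt_integral_pos {Ω : Type} [TopologicalSpace Ω] [PolishSpace Ω] [MeasurableSpace Ω]
    [BorelSpace Ω] {m : ℕ} (O : GoodOS Ω m) {s r : Fin m → ℝ} (hs : s ∈ O.M) (hr : r ∈ O.M) :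
    0 < ∫ ω, Real.sqrt (O.p s ω * O.p r ω) ∂O.P := by
  rw [sqrt_integral_eq O hs hr]
  exact O.mgf_pos _ (mem_neghalf O hs hr) s hs

private lemma sqrt_integral_integrable {Ω : Type} [TopologicalSpace Ω] [PolishSpace Ω]
    [MeasurableSpace Ω] [BorelSpace Ω] {m : ℕ} (O : GoodOS Ω m) {s r : Fin m → ℝ}
    (hs : s ∈ O.M) (hr : r ∈ O.M) :
    Integrable (fun ω => Real.sqrt (O.p s ω * O.p r ω)) O.P :=
  (O.mgf_integrable _ (mem_neghalf O hs hr) s hs).congr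
    (Filter.Eventually.of_forall fun ω =>
      exp_neg_half_log (O.p_pos s hs ω) (O.p_pos r hr ω))

private lemma p_slice_cont {Ω : Type} [TopologicalSpace Ω] [PolishSpace Ω] [MeasurableSpace Ω]
    [BorelSpace Ω] {m : ℕ} (O : GoodOS Ω m) {s : Fin m → ℝ} (hs : s ∈ O.M) :
    Continuous (fun ω => O.p s ω) :=
  O.p_cont.comp_continuous (Continuous.prodMk_right s) (fun ω => ⟨hs, trivial⟩)

/- ### The key one-observation bound -/

private lemma core {Ω : Type} [TopologicalSpace Ω] [PolishSpace Ω] [MeasurableSpace Ω]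
    [BorelSpace Ω] {m : ℕ} (O : GoodOS Ω m)
    {X : Set (Fin m → ℝ)} (hXM : X ⊆ O.M) (hXc : Convex ℝ X)
    {xs rs : Fin m → ℝ} (hxs : xs ∈ X) (hrs : rs ∈ O.M)
    (hopt : ∀ x ∈ X, ∫ ω, Real.sqrt (O.p x ω * O.p rs ω) ∂O.P ≤
        ∫ ω, Real.sqrt (O.p xs ω * O.p rs ω) ∂O.P)
    {x : Fin m → ℝ} (hx : x ∈ X) :
    ∫ ω, Real.exp (-(1/2) * Real.log (O.p xs ω / O.p rs ω)) * O.p x ω ∂O.P ≤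
      ∫ ω, Real.sqrt (O.p xs ω * O.p rs ω) ∂O.P := by
  have hxsM := hXM hxs
  have hxM := hXM hx
  set Istar := ∫ ω, Real.sqrt (O.p xs ω * O.p rs ω) ∂O.P with hIstar
  have hIstar_pos : 0 < Istar := by rw [hIstar]; exact sqrt_integral_pos O hxsM hrs
  -- Step 1: for every 0 < t ≤ 1, the detector based on the intermediate point
  -- `(1-t) • xs + t • x` satisfies the required bound at `x`.
  have key : ∀ t : ℝ, 0 < t → t ≤ 1 →
      (∫ ω, Real.exp (-(1/2) * Real.log (O.p ((1-t) • xs + t • x) ω / O.p rs ω)) *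
        O.p x ω ∂O.P) ≤ Istar := by
    intro t ht0 ht1
    have hcX : (1-t) • xs + t • x ∈ X := hXc hxs hx (by linarith) ht0.le (by ring)
    have hcM : (1-t) • xs + t • x ∈ O.M := hXM hcX
    set c := (1-t) • xs + t • x with hc
    set B := ∫ ω, Real.exp (-(1/2) * Real.log (O.p c ω / O.p rs ω)) * O.p xs ω ∂O.P with hB
    set D := ∫ ω, Real.exp (-(1/2) * Real.log (O.p c ω / O.p rs ω)) * O.p x ω ∂O.P with hD
    set I := ∫ ω, Real.exp (-(1/2) * Real.log (O.p c ω / O.p rs ω)) * O.p c ω ∂O.P with hI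
    set C := ∫ ω, Real.exp ((1/2) * Real.log (O.p c ω / O.p rs ω)) * O.p rs ω ∂O.P with hC
    have hBpos : 0 < B := by rw [hB]; exact O.mgf_pos _ (mem_neghalf O hcM hrs) xs hxsM
    have hDpos : 0 < D := by rw [hD]; exact O.mgf_pos _ (mem_neghalf O hcM hrs) x hxM
    have hIpos : 0 < I := by rw [hI]; exact O.mgf_pos _ (mem_neghalf O hcM hrs) c hcM
    have hCpos : 0 < C := by rw [hC]; exact O.mgf_pos _ (mem_poshalf O hcM hrs) rs hrs
    have hIC : I = C := by
      rw [hI, hC]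
      exact integral_congr_ae (Filter.Eventually.of_forall fun ω =>
        (exp_neg_half_log (O.p_pos c hcM ω) (O.p_pos rs hrs ω)).trans
          (exp_pos_half_log (O.p_pos c hcM ω) (O.p_pos rs hrs ω)).symm)
    have hIle : I ≤ Istar := by
      rw [hI, ← sqrt_integral_eq O hcM hrs]
      exact hopt c hcX
    have hCS : Istar ≤ Real.sqrt (B * C) := by
      rw [hIstar, hB, hC]
      refine integral_sqrt_le (O.mgf_integrable _ (mem_neghalf O hcM hrs) xs hxsM)
        (O.mgf_integrable _ (mem_poshalf O hcM hrs) rs hrs)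
        (sqrt_integral_integrable O hxsM hrs)
        (fun ω => mul_nonneg (Real.exp_pos _).le (O.p_pos xs hxsM ω).le)
        (fun ω => mul_nonneg (Real.exp_pos _).le (O.p_pos rs hrs ω).le)
        (fun ω => ?_)
        (O.mgf_pos _ (mem_neghalf O hcM hrs) xs hxsM)
        (O.mgf_pos _ (mem_poshalf O hcM hrs) rs hrs)
      have hexp : Real.exp (-(1/2) * Real.log (O.p c ω / O.p rs ω)) *
          Real.exp ((1/2) * Real.log (O.p c ω / O.p rs ω)) = 1 := by
        rw [← Real.exp_add, show -(1/2) * Real.log (O.p c ω / O.p rs ω) +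
          (1/2) * Real.log (O.p c ω / O.p rs ω) = 0 by ring, Real.exp_zero]
      have h1 : (Real.exp (-(1/2) * Real.log (O.p c ω / O.p rs ω)) * O.p xs ω) *
          (Real.exp ((1/2) * Real.log (O.p c ω / O.p rs ω)) * O.p rs ω)
          = O.p xs ω * O.p rs ω := by
        calc (Real.exp (-(1/2) * Real.log (O.p c ω / O.p rs ω)) * O.p xs ω) *
            (Real.exp ((1/2) * Real.log (O.p c ω / O.p rs ω)) * O.p rs ω)
            = (Real.exp (-(1/2) * Real.log (O.p c ω / O.p rs ω)) *
              Real.exp ((1/2) * Real.log (O.p c ω / O.p rs ω))) *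
              (O.p xs ω * O.p rs ω) := by ring
          _ = O.p xs ω * O.p rs ω := by rw [hexp, one_mul]
      rw [h1]
    have hlog1 : Real.log I ≤ Real.log Istar := (Real.log_le_log_iff hIpos hIstar_pos).mpr hIle
    have hlog2 : 2 * Real.log Istar ≤ Real.log B + Real.log I := by
      have h := (Real.log_le_log_iff hIstar_pos
        (Real.sqrt_pos.mpr (mul_pos hBpos hCpos))).mpr hCS
      rw [Real.log_sqrt (mul_pos hBpos hCpos).le, Real.log_mul hBpos.ne' hCpos.ne',
        ← hIC] at h
      linarith
    have hconc : (1-t) * Real.log B + t * Real.log D ≤ Real.log I := by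
      have h := (O.mgf_concave _ (mem_neghalf O hcM hrs)).2 hxsM hxM
        (by linarith : (0:ℝ) ≤ 1 - t) ht0.le (by ring)
      rw [hB, hD, hI, hc]
      simpa using h
    have hlogD : Real.log D ≤ Real.log Istar := log_combine ht0 ht1 hlog1 hlog2 hconc
    exact (Real.log_le_log_iff hDpos hIstar_pos).mp hlogD
  -- Step 2: let t → 0 and use Fatou's lemma.
  have htn : ∀ n : ℕ, (0:ℝ) < 1/(n+1) := fun n => by positivity
  have htn1 : ∀ n : ℕ, (1:ℝ)/(n+1) ≤ 1 := fun n => by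
    rw [div_le_one (by positivity)]
    have : (0:ℝ) ≤ n := Nat.cast_nonneg n
    linarith
  set c : ℕ → Fin m → ℝ := fun n => (1 - 1/((n:ℝ)+1)) • xs + (1/((n:ℝ)+1)) • x with hcdef
  have hcX : ∀ n, c n ∈ X := by
    intro n
    simp only [hcdef]
    exact hXc hxs hx (a := 1 - 1/((n:ℝ)+1)) (b := 1/((n:ℝ)+1))
      (by linarith [htn1 n]) (htn n).le (by ring)
  have hcM : ∀ n, c n ∈ O.M := fun n => hXM (hcX n)
  have hDn : ∀ n : ℕ,
      (∫ ω, Real.exp (-(1/2) * Real.log (O.p (c n) ω / O.p rs ω)) * O.p x ω ∂O.P) ≤ Istar :=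
    fun n => key (1/(n+1)) (htn n) (htn1 n)
  have hc_tend : Filter.Tendsto c Filter.atTop (nhds xs) := by
    rw [hcdef]
    have h0 : Filter.Tendsto (fun n : ℕ => (1:ℝ)/(n+1)) Filter.atTop (nhds 0) :=
      tendsto_one_div_add_atTop_nhds_zero_nat
    have h1 : Filter.Tendsto (fun n : ℕ => (1 - 1/((n:ℝ)+1))) Filter.atTop (nhds 1) := by
      simpa using h0.const_sub 1
    have h2 : Filter.Tendsto (fun n : ℕ => (1 - 1/((n:ℝ)+1)) • xs + (1/((n:ℝ)+1)) • x)
        Filter.atTop (nhds ((1:ℝ) • xs + (0:ℝ) • x)) :=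
      (h1.smul tendsto_const_nhds).add (h0.smul tendsto_const_nhds)
    simpa using h2
  have hptend : ∀ ω, Filter.Tendsto (fun n => O.p (c n) ω) Filter.atTop (nhds (O.p xs ω)) := by
    intro ω
    have h1 : Filter.Tendsto (fun n => ((c n, ω) : (Fin m → ℝ) × Ω)) Filter.atTop
        (nhdsWithin (xs, ω) (O.M ×ˢ (Set.univ : Set Ω))) := by
      rw [tendsto_nhdsWithin_iff]
      exact ⟨hc_tend.prodMk_nhds tendsto_const_nhds,
        Filter.Eventually.of_forall fun n => ⟨hcM n, trivial⟩⟩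
    exact Filter.Tendsto.comp (O.p_cont (xs, ω) ⟨hxsM, trivial⟩) h1
  have htends : ∀ ω, Filter.Tendsto
      (fun n => Real.exp (-(1/2) * Real.log (O.p (c n) ω / O.p rs ω)) * O.p x ω)
      Filter.atTop
      (nhds (Real.exp (-(1/2) * Real.log (O.p xs ω / O.p rs ω)) * O.p x ω)) := by
    intro ω
    have h1 : Filter.Tendsto (fun n => O.p (c n) ω / O.p rs ω) Filter.atTop
        (nhds (O.p xs ω / O.p rs ω)) := (hptend ω).div_const _
    have h2 := ((Real.continuousAt_log
      (ne_of_gt (div_pos (O.p_pos xs hxsM ω) (O.p_pos rs hrs ω)))).tendsto).comp h1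
    have h3 := h2.const_mul (-(1/2) : ℝ)
    have h4 := (Real.continuous_exp.tendsto _).comp h3
    exact h4.mul_const _
  have hgmeas : ∀ n : ℕ, Measurable (fun ω =>
      ENNReal.ofReal (Real.exp (-(1/2) * Real.log (O.p (c n) ω / O.p rs ω)) * O.p x ω)) := by
    intro n
    apply ENNReal.measurable_ofReal.comp
    exact ((Real.measurable_exp.comp (((Real.measurable_log.comp
      (((p_slice_cont O (hcM n)).measurable).div ((p_slice_cont O hrs).measurable)))).const_mul
      (-(1/2)))).mul ((p_slice_cont O hxM).measurable))
  have hInt0 : Integrable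
      (fun ω => Real.exp (-(1/2) * Real.log (O.p xs ω / O.p rs ω)) * O.p x ω) O.P :=
    O.mgf_integrable _ (mem_neghalf O hxsM hrs) x hxM
  have hIntn : ∀ n : ℕ, Integrable
      (fun ω => Real.exp (-(1/2) * Real.log (O.p (c n) ω / O.p rs ω)) * O.p x ω) O.P :=
    fun n => O.mgf_integrable _ (mem_neghalf O (hcM n) hrs) x hxM
  have hb : ∀ n : ℕ, (∫⁻ ω, ENNReal.ofReal
      (Real.exp (-(1/2) * Real.log (O.p (c n) ω / O.p rs ω)) * O.p x ω) ∂O.P)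
      ≤ ENNReal.ofReal Istar := by
    intro n
    rw [← ofReal_integral_eq_lintegral_ofReal (hIntn n) (Filter.Eventually.of_forall fun ω =>
      mul_nonneg (Real.exp_pos _).le (O.p_pos x hxM ω).le)]
    exact ENNReal.ofReal_le_ofReal (hDn n)
  have heq : (∫⁻ ω, ENNReal.ofReal
      (Real.exp (-(1/2) * Real.log (O.p xs ω / O.p rs ω)) * O.p x ω) ∂O.P)
      = ∫⁻ ω, Filter.liminf (fun n => ENNReal.ofReal
        (Real.exp (-(1/2) * Real.log (O.p (c n) ω / O.p rs ω)) * O.p x ω)) Filter.atTop ∂O.P :=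
    lintegral_congr fun ω =>
      (((ENNReal.continuous_ofReal.tendsto _).comp (htends ω)).liminf_eq).symm
  have hle1 : (∫⁻ ω, Filter.liminf (fun n => ENNReal.ofReal
      (Real.exp (-(1/2) * Real.log (O.p (c n) ω / O.p rs ω)) * O.p x ω)) Filter.atTop ∂O.P)
      ≤ Filter.liminf (fun n => ∫⁻ ω, ENNReal.ofReal
        (Real.exp (-(1/2) * Real.log (O.p (c n) ω / O.p rs ω)) * O.p x ω) ∂O.P)
        Filter.atTop :=
    lintegral_liminf_le hgmeas
  have hle2 : Filter.liminf (fun n => ∫⁻ ω, ENNReal.ofReal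
      (Real.exp (-(1/2) * Real.log (O.p (c n) ω / O.p rs ω)) * O.p x ω) ∂O.P)
      Filter.atTop ≤ ENNReal.ofReal Istar := by
    refine le_trans (Filter.liminf_le_liminf (Filter.Eventually.of_forall hb)) ?_
    exact le_of_eq (Filter.liminf_const _)
  have hofReal : ENNReal.ofReal
      (∫ ω, Real.exp (-(1/2) * Real.log (O.p xs ω / O.p rs ω)) * O.p x ω ∂O.P)
      ≤ ENNReal.ofReal Istar := by
    rw [ofReal_integral_eq_lintegral_ofReal hInt0 (Filter.Eventually.of_forall fun ω =>
      mul_nonneg (Real.exp_pos _).le (O.p_pos x hxM ω).le), heq]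
    exact le_trans hle1 hle2
  exact (ENNReal.ofReal_le_ofReal_iff hIstar_pos.le).mp hofReal

/- ### The `K`-fold Chernoff-type bound -/

private lemma kfold {Ω : Type} [MeasurableSpace Ω] {P : Measure Ω} (hsf : SigmaFinite P)
    (K : ℕ) (q ξ : Ω → ℝ) (hq_meas : Measurable q) (hξ_meas : Measurable ξ)
    (hq_nonneg : ∀ ω, 0 ≤ q ω)
    (hg_int : Integrable (fun ω => Real.exp (ξ ω) * q ω) P)
    (ε : ℝ) (hgε : ∫ ω, Real.exp (ξ ω) * q ω ∂P ≤ ε)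
    {S : Set (Fin K → Ω)} (hS : MeasurableSet S)
    (hSsub : ∀ y ∈ S, 0 ≤ ∑ t, ξ (y t)) :
    (Measure.pi fun _ : Fin K => P).withDensity (fun y => ENNReal.ofReal (∏ k, q (y k))) S ≤
      ENNReal.ofReal (ε ^ K) := by
  letI : MeasureSpace Ω := ⟨P⟩
  haveI : SigmaFinite (volume : Measure Ω) := hsf
  have hg_nonneg : ∀ ω, 0 ≤ Real.exp (ξ ω) * q ω :=
    fun ω => mul_nonneg (Real.exp_pos _).le (hq_nonneg ω)
  have hpiv : (Measure.pi fun _ : Fin K => P) = (volume : Measure (Fin K → Ω)) :=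
    volume_pi.symm
  rw [withDensity_apply _ hS, hpiv]
  have hint : Integrable (fun y : Fin K → Ω => ∏ k, Real.exp (ξ (y k)) * q (y k)) :=
    Integrable.fintype_prod (f := fun _ : Fin K => fun ω => Real.exp (ξ ω) * q ω)
      (fun _ => hg_int)
  calc ∫⁻ y in S, ENNReal.ofReal (∏ k, q (y k)) ∂(volume : Measure (Fin K → Ω))
      ≤ ∫⁻ y in S, ENNReal.ofReal (∏ k, Real.exp (ξ (y k)) * q (y k))
          ∂(volume : Measure (Fin K → Ω)) := by
        apply setLIntegral_mono
        · apply ENNReal.measurable_ofReal.comp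
          apply Finset.measurable_prod _ (fun k _ => ?_)
          exact ((Real.measurable_exp.comp (hξ_meas.comp (measurable_pi_apply k))).mul
            (hq_meas.comp (measurable_pi_apply k)))
        · intro y hy
          apply ENNReal.ofReal_le_ofReal
          have he : ∏ k, Real.exp (ξ (y k)) * q (y k)
              = Real.exp (∑ k, ξ (y k)) * ∏ k, q (y k) := by
            rw [Finset.prod_mul_distrib, Real.exp_sum]
          rw [he]
          have h1 : (1:ℝ) ≤ Real.exp (∑ k, ξ (y k)) := Real.one_le_exp (hSsub y hy)
          have h2 : 0 ≤ ∏ k, q (y k) := Finset.prod_nonneg fun k _ => hq_nonneg _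
          nlinarith
    _ ≤ ∫⁻ y, ENNReal.ofReal (∏ k, Real.exp (ξ (y k)) * q (y k))
          ∂(volume : Measure (Fin K → Ω)) := setLIntegral_le_lintegral _ _
    _ = ENNReal.ofReal (∫ y : Fin K → Ω, ∏ k, Real.exp (ξ (y k)) * q (y k)) :=
        (ofReal_integral_eq_lintegral_ofReal hint (Filter.Eventually.of_forall fun y =>
          Finset.prod_nonneg fun k _ => hg_nonneg _)).symm
    _ = ENNReal.ofReal ((∫ ω, Real.exp (ξ ω) * q ω) ^ K) := by
        rw [← hpiv, integral_fintype_prod_eq_pow (ι := Fin K) (fun ω => Real.exp (ξ ω) * q ω), Fintype.card_fin]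
        rfl
    _ ≤ ENNReal.ofReal (ε ^ K) := ENNReal.ofReal_le_ofReal
        (pow_le_pow_left₀ (integral_nonneg hg_nonneg) hgε K)

/-- In a good observation scheme, with `(μ_*, ν_*)` an optimal solution
of `max_{μ∈M₁,ν∈M₂} ln ∫ √(p_μ p_ν) dP`, `ε_* = e^{Opt}` and the detector
`φ_*(ω) = ½ ln(p_{μ_*}(ω)/p_{ν_*}(ω))`, the test accepting `H₁ : μ ∈ M₁` when
`Σ_t φ_*(ω_t) ≥ 0` and `H₂ : μ ∈ M₂` otherwise has risk at most `ε_*^K` on stationary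
`K`-repeated observations. -/
theorem detector_test_risk {Ω : Type} [TopologicalSpace Ω] [PolishSpace Ω]
    [MeasurableSpace Ω] [BorelSpace Ω] {m : ℕ} (O : GoodOS Ω m)
    (M₁ M₂ : Set (Fin m → ℝ)) (h₁ne : M₁.Nonempty) (h₂ne : M₂.Nonempty)
    (h₁M : M₁ ⊆ O.M) (h₂M : M₂ ⊆ O.M)
    (h₁c : Convex ℝ M₁) (h₁k : IsCompact M₁)
    (h₂c : Convex ℝ M₂) (h₂k : IsCompact M₂)
    (μs νs : Fin m → ℝ) (hμs : μs ∈ M₁) (hνs : νs ∈ M₂)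
    (hopt : ∀ μ ∈ M₁, ∀ ν ∈ M₂,
      Real.log (∫ ω, Real.sqrt (O.p μ ω * O.p ν ω) ∂O.P) ≤
        Real.log (∫ ω, Real.sqrt (O.p μs ω * O.p νs ω) ∂O.P))
    (εs : ℝ)
    (hεs : εs = Real.exp (Real.log (∫ ω, Real.sqrt (O.p μs ω * O.p νs ω) ∂O.P)))
    (φs : Ω → ℝ) (hφs : φs = fun ω => (1 / 2) * Real.log (O.p μs ω / O.p νs ω))
    (K : ℕ) (hK : 0 < K) :
    (∀ μ ∈ M₁,
      prodDensityMeasure O.P K (O.p μ) {y | (∑ t, φs (y t)) < 0} ≤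
        ENNReal.ofReal (εs ^ K)) ∧
    (∀ ν ∈ M₂,
      prodDensityMeasure O.P K (O.p ν) {y | 0 ≤ ∑ t, φs (y t)} ≤
        ENNReal.ofReal (εs ^ K)) := by
  subst hφs
  subst hεs
  have hμsM : μs ∈ O.M := h₁M hμs
  have hνsM : νs ∈ O.M := h₂M hνs
  have hIpos : 0 < ∫ ω, Real.sqrt (O.p μs ω * O.p νs ω) ∂O.P := sqrt_integral_pos O hμsM hνsM
  rw [Real.exp_log hIpos]
  have hφmeas : Measurable (fun ω => (1/2 : ℝ) * Real.log (O.p μs ω / O.p νs ω)) :=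
    (Real.measurable_log.comp ((p_slice_cont O hμsM).measurable.div
      (p_slice_cont O hνsM).measurable)).const_mul _
  have hsum_meas : Measurable
      (fun y : Fin K → Ω => ∑ t, (1/2 : ℝ) * Real.log (O.p μs (y t) / O.p νs (y t))) :=
    Finset.measurable_sum _ (fun t _ => hφmeas.comp (measurable_pi_apply t))
  constructor
  · intro μ hμ
    have hμM := h₁M hμ
    have hopt1 : ∀ x ∈ M₁, ∫ ω, Real.sqrt (O.p x ω * O.p νs ω) ∂O.P ≤
        ∫ ω, Real.sqrt (O.p μs ω * O.p νs ω) ∂O.P := fun x hx =>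
      (Real.log_le_log_iff (sqrt_integral_pos O (h₁M hx) hνsM) hIpos).mp (hopt x hx νs hνs)
    have hone : ∫ ω, Real.exp (-(1/2) * Real.log (O.p μs ω / O.p νs ω)) * O.p μ ω ∂O.P ≤
        ∫ ω, Real.sqrt (O.p μs ω * O.p νs ω) ∂O.P := core O h₁M h₁c hμs hνsM hopt1 hμ
    have hS : MeasurableSet
        {y : Fin K → Ω | (∑ t, (1/2:ℝ) * Real.log (O.p μs (y t) / O.p νs (y t))) < 0} :=
      measurableSet_lt hsum_meas measurable_const
    have hSsub : ∀ y ∈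
        {y : Fin K → Ω | (∑ t, (1/2:ℝ) * Real.log (O.p μs (y t) / O.p νs (y t))) < 0},
        0 ≤ ∑ t, -(1/2) * Real.log (O.p μs (y t) / O.p νs (y t)) := by
      intro y hy
      have h1 : ∑ t, -(1/2) * Real.log (O.p μs (y t) / O.p νs (y t))
          = -∑ t, (1/2:ℝ) * Real.log (O.p μs (y t) / O.p νs (y t)) := by
        rw [← Finset.sum_neg_distrib]
        exact Finset.sum_congr rfl fun t _ => by ring
      rw [h1]
      simp only [Set.mem_setOf_eq] at hy
      linarith
    exact kfold O.sigmaFinite K (O.p μ)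
      (fun ω => -(1/2) * Real.log (O.p μs ω / O.p νs ω))
      (p_slice_cont O hμM).measurable
      ((Real.measurable_log.comp ((p_slice_cont O hμsM).measurable.div
        (p_slice_cont O hνsM).measurable)).const_mul _)
      (fun ω => (O.p_pos μ hμM ω).le)
      (O.mgf_integrable _ (mem_neghalf O hμsM hνsM) μ hμM)
      _ hone hS hSsub
  · intro ν hν
    have hνM := h₂M hν
    have hcomm : ∀ a b : Fin m → ℝ, (∫ ω, Real.sqrt (O.p a ω * O.p b ω) ∂O.P)
        = ∫ ω, Real.sqrt (O.p b ω * O.p a ω) ∂O.P :=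
      fun a b => integral_congr_ae (Filter.Eventually.of_forall fun ω =>
        show Real.sqrt (O.p a ω * O.p b ω) = Real.sqrt (O.p b ω * O.p a ω) by rw [mul_comm])
    have hopt2 : ∀ x ∈ M₂, ∫ ω, Real.sqrt (O.p x ω * O.p μs ω) ∂O.P ≤
        ∫ ω, Real.sqrt (O.p νs ω * O.p μs ω) ∂O.P := by
      intro x hx
      have h := hopt μs hμs x hx
      rw [hcomm x μs, hcomm νs μs]
      exact (Real.log_le_log_iff (sqrt_integral_pos O hμsM (h₂M hx)) hIpos).mp h
    have hone2 : ∫ ω, Real.exp (-(1/2) * Real.log (O.p νs ω / O.p μs ω)) * O.p ν ω ∂O.P ≤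
        ∫ ω, Real.sqrt (O.p νs ω * O.p μs ω) ∂O.P := core O h₂M h₂c hνs hμsM hopt2 hν
    rw [hcomm νs μs] at hone2
    have hS : MeasurableSet
        {y : Fin K → Ω | 0 ≤ ∑ t, (1/2:ℝ) * Real.log (O.p μs (y t) / O.p νs (y t))} :=
      measurableSet_le measurable_const hsum_meas
    have hpt : ∀ ω, -(1/2) * Real.log (O.p νs ω / O.p μs ω)
        = (1/2) * Real.log (O.p μs ω / O.p νs ω) := by
      intro ω
      rw [Real.log_div (O.p_pos νs hνsM ω).ne' (O.p_pos μs hμsM ω).ne',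
        Real.log_div (O.p_pos μs hμsM ω).ne' (O.p_pos νs hνsM ω).ne']
      ring
    have hSsub : ∀ y ∈
        {y : Fin K → Ω | 0 ≤ ∑ t, (1/2:ℝ) * Real.log (O.p μs (y t) / O.p νs (y t))},
        0 ≤ ∑ t, -(1/2) * Real.log (O.p νs (y t) / O.p μs (y t)) := by
      intro y hy
      have h1 : ∑ t, -(1/2) * Real.log (O.p νs (y t) / O.p μs (y t))
          = ∑ t, (1/2:ℝ) * Real.log (O.p μs (y t) / O.p νs (y t)) :=
        Finset.sum_congr rfl fun t _ => hpt (y t)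
      rw [h1]
      simpa using hy
    exact kfold O.sigmaFinite K (O.p ν)
      (fun ω => -(1/2) * Real.log (O.p νs ω / O.p μs ω))
      (p_slice_cont O hνM).measurable
      ((Real.measurable_log.comp ((p_slice_cont O hνsM).measurable.div
        (p_slice_cont O hμsM).measurable)).const_mul _)
      (fun ω => (O.p_pos ν hνM ω).le)
      (O.mgf_integrable _ (mem_neghalf O hνsM hμsM) ν hνM)
      _ hone2 hS hSsub
end

section
/- Let S = {s_1 < s_2 < … < s_M} ⊂ ℝ, let r be a probability vector on S with all entries positive, and define F_m(r) = Σ_{i=1}^m r_i. Define the regularized cumulative distribution G_r : [s_1, s_M] → [0,1] by G_r(s_1) = F_1(r) and, for s ∈ [s_k, s_{k+1}] (1 ≤ k ≤ M−1), G_r(s) = F_k(r) + r_{k+1}(s − s_k)/(s_{k+1} − s_k); and define the regularized α-quantile χ_α[r] = min{ s ∈ [s_1, s_M] : G_r(s) ≥ α } for α ∈ [0,1]. Then for every α ∈ [0,1], every k with 1 ≤ k ≤ M−1, and every s with s_k < s ≤ s_{k+1}: χ_α[r] ≤ s if and only if (s_{k+1} − s) F_k(r) + (s − s_k) F_{k+1}(r)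 ≥ α (s_{k+1} − s_k), and χ_α[r] ≥ s if and only if (s_{k+1} − s) F_k(r) + (s − s_k) F_{k+1}(r) ≤ α (s_{k+1} − s_k). Consequently each level set {r : χ_α[r] ≤ s} and {r : χ_α[r] ≥ s} within the set of positive probability vectors is cut out by a single nonstrict linear inequality in r, i.e., the regularized quantile is 1-convex. -/
set_option maxHeartbeats 1000000 in
/-- Characterization of the regularized quantile of a positive
probability vector `r` on `s_1 < … < s_M` (0-indexed here as `s 0 < … < s (M-1)`):
with `F r k = Σ_{i<k} r i` the cumulative sums, `G r` the piecewise-linear regularized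
c.d.f. and `χ r α = min{x ∈ [s 0, s (M-1)] : G r x ≥ α}` the regularized `α`-quantile,
for every `k` with `1 ≤ k ≤ M-1` and every `x` with `s (k-1) < x ≤ s k` one has
`χ r α ≤ x ↔ (s k − x) F r k + (x − s (k-1)) F r (k+1) ≥ α (s k − s (k-1))` and
`χ r α ≥ x ↔ (s k − x) F r k + (x − s (k-1)) F r (k+1) ≤ α (s k − s (k-1))`;
consequently both level sets of `χ · α` within the positive probability vectors are
cut out by a single nonstrict linear inequality, i.e. they are convex
(the regularized quantile is 1-convex). -/
theorem regularized_quantile_one_convex (M : ℕ) (hM : 1 ≤ M) (s : ℕ → ℝ)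
    (hs : ∀ i j : ℕ, i < j → j < M → s i < s j)
    (F : (ℕ → ℝ) → ℕ → ℝ) (hF : ∀ r k, F r k = ∑ i ∈ Finset.range k, r i)
    (G : (ℕ → ℝ) → ℝ → ℝ)
    (hG : ∀ r : ℕ → ℝ, (∀ i < M, 0 < r i) → (∑ i ∈ Finset.range M, r i) = 1 →
        ∀ k : ℕ, 1 ≤ k → k ≤ M - 1 → ∀ x : ℝ, s (k - 1) ≤ x → x ≤ s k →
          G r x = F r k + r k * (x - s (k - 1)) / (s k - s (k - 1)))
    (χ : (ℕ → ℝ) → ℝ → ℝ)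
    (hχ : ∀ r α, χ r α = sInf {x | s 0 ≤ x ∧ x ≤ s (M - 1) ∧ α ≤ G r x}) :
    ∀ α : ℝ, 0 ≤ α → α ≤ 1 →
    ∀ k : ℕ, 1 ≤ k → k ≤ M - 1 →
    ∀ x : ℝ, s (k - 1) < x → x ≤ s k →
      (∀ r : ℕ → ℝ, (∀ i < M, 0 < r i) → (∑ i ∈ Finset.range M, r i) = 1 →
        ((χ r α ≤ x ↔
            α * (s k - s (k - 1)) ≤ (s k - x) * F r k + (x - s (k - 1)) * F r (k + 1)) ∧
         (x ≤ χ r α ↔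
            (s k - x) * F r k + (x - s (k - 1)) * F r (k + 1) ≤ α * (s k - s (k - 1))))) ∧
      Convex ℝ {r : ℕ → ℝ | (∀ i < M, 0 < r i) ∧ (∑ i ∈ Finset.range M, r i) = 1 ∧
        χ r α ≤ x} ∧
      Convex ℝ {r : ℕ → ℝ | (∀ i < M, 0 < r i) ∧ (∑ i ∈ Finset.range M, r i) = 1 ∧
        x ≤ χ r α} := by
  intro α hα0 hα1 k hk1 hkM x hxl hxr
  classical
  have hM2 : 2 ≤ M := by omega
  have smono : ∀ i j : ℕ, i ≤ j → j ≤ M - 1 → s i ≤ s j := by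
    intro i j hij hj
    rcases eq_or_lt_of_le hij with rfl | h
    · exact le_rfl
    · exact (hs i j h (by omega)).le
  have hΔpos : ∀ j : ℕ, 1 ≤ j → j ≤ M - 1 → 0 < s j - s (j - 1) := by
    intro j h1 h2
    have := hs (j - 1) j (by omega) (by omega)
    linarith
  have hΔk : 0 < s k - s (k - 1) := hΔpos k hk1 hkM
  have hx0 : s 0 ≤ x := le_trans (smono 0 (k - 1) (by omega) (by omega)) hxl.le
  have hxM : x ≤ s (M - 1) := le_trans hxr (smono k (M - 1) hkM le_rfl)
  have key : ∀ r : ℕ → ℝ, (∀ i < M, 0 < r i) → (∑ i ∈ Finset.range M, r i) = 1 →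
      ((χ r α ≤ x ↔
          α * (s k - s (k - 1)) ≤ (s k - x) * F r k + (x - s (k - 1)) * F r (k + 1)) ∧
       (x ≤ χ r α ↔
          (s k - x) * F r k + (x - s (k - 1)) * F r (k + 1) ≤ α * (s k - s (k - 1)))) := by
    intro r hpos hsum
    have hFsucc : ∀ m : ℕ, F r (m + 1) = F r m + r m := by
      intro m; rw [hF, hF, Finset.sum_range_succ]
    have hFmono : ∀ i j : ℕ, i ≤ j → j ≤ M → F r i ≤ F r j := by
      intro i j hij hj
      rw [hF, hF]
      apply Finset.sum_le_sum_of_subset_of_nonneg (Finset.range_subset_range.2 hij)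
      intro t ht _
      exact (hpos t (lt_of_lt_of_le (Finset.mem_range.1 ht) hj)).le
    have hGval := hG r hpos hsum
    have hGlb : ∀ j, 1 ≤ j → j ≤ M - 1 → ∀ y, s (j - 1) ≤ y → y ≤ s j →
        F r j ≤ G r y := by
      intro j h1 h2 y hy1 hy2
      rw [hGval j h1 h2 y hy1 hy2]
      have hΔ := hΔpos j h1 h2
      have hr := hpos j (by omega)
      have : 0 ≤ r j * (y - s (j - 1)) / (s j - s (j - 1)) :=
        div_nonneg (mul_nonneg hr.le (by linarith)) hΔ.le
      linarith
    have hGubs : ∀ j, 1 ≤ j → j ≤ M - 1 → ∀ y, s (j - 1) ≤ y → y < s j →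
        G r y < F r (j + 1) := by
      intro j h1 h2 y hy1 hy2
      rw [hGval j h1 h2 y hy1 hy2.le, hFsucc]
      have hΔ := hΔpos j h1 h2
      have hr := hpos j (by omega)
      have : r j * (y - s (j - 1)) / (s j - s (j - 1)) < r j := by
        rw [div_lt_iff₀ hΔ]; nlinarith
      linarith
    have hGtop : G r (s (M - 1)) = 1 := by
      have h1 : (1 : ℕ) ≤ M - 1 := by omega
      have he := hGval (M - 1) h1 le_rfl (s (M - 1))
        (smono (M - 1 - 1) (M - 1) (by omega) le_rfl) le_rfl
      rw [he, mul_div_assoc, div_self (ne_of_gt (hΔpos (M - 1) h1 le_rfl)), mul_one]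
      have h2 : F r M = F r (M - 1) + r (M - 1) := by
        have := hFsucc (M - 1)
        rw [show M - 1 + 1 = M from by omega] at this
        exact this
      rw [← h2, hF]
      exact hsum
    have hfind : ∀ y, s 0 ≤ y → y < s (M - 1) →
        ∃ j, 1 ≤ j ∧ j ≤ M - 1 ∧ s (j - 1) ≤ y ∧ y < s j := by
      intro y hy0 hyM
      set j0 := Nat.findGreatest (fun i => s i ≤ y) (M - 2) with hj0
      have hspec : s j0 ≤ y :=
        Nat.findGreatest_spec (P := fun i => s i ≤ y) (Nat.zero_le _) hy0
      have hle : j0 ≤ M - 2 := Nat.findGreatest_le _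
      refine ⟨j0 + 1, by omega, by omega, by simpa using hspec, ?_⟩
      by_contra hcon
      push_neg at hcon
      by_cases hc : j0 + 1 ≤ M - 2
      · exact Nat.findGreatest_is_greatest (Nat.lt_succ_self _) hc hcon
      · have h2 : j0 + 1 = M - 1 := by omega
        rw [h2] at hcon
        linarith
    have hseg : ∀ y, s 0 ≤ y → y ≤ s (M - 1) →
        ∃ j, 1 ≤ j ∧ j ≤ M - 1 ∧ s (j - 1) ≤ y ∧ y ≤ s j := by
      intro y hy0 hyM
      rcases lt_or_eq_of_le hyM with h | h
      · obtain ⟨j, a, b, c, d⟩ := hfind y hy0 h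
        exact ⟨j, a, b, c, d.le⟩
      · exact ⟨M - 1, by omega, le_rfl,
          by rw [h]; exact smono (M - 1 - 1) (M - 1) (by omega) le_rfl, hyM⟩
    have hGmono : ∀ y z, s 0 ≤ y → z ≤ s (M - 1) → y < z → G r y < G r z := by
      intro y z hy hz hyz
      obtain ⟨j, hj1, hj2, hy1, hy2⟩ := hfind y hy (lt_of_lt_of_le hyz hz)
      obtain ⟨l, hl1, hl2, hz1, hz2⟩ := hseg z (le_trans hy hyz.le) hz
      by_cases hc : z ≤ s j
      · have hz1' : s (j - 1) ≤ z := le_trans hy1 hyz.le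
        rw [hGval j hj1 hj2 y hy1 hy2.le, hGval j hj1 hj2 z hz1' hc]
        have hΔ := hΔpos j hj1 hj2
        have hr := hpos j (by omega)
        have h1 : r j * (y - s (j - 1)) / (s j - s (j - 1)) <
            r j * (z - s (j - 1)) / (s j - s (j - 1)) := by
          rw [div_lt_div_iff₀ hΔ hΔ]
          nlinarith [mul_pos hr hΔ]
        linarith
      · push_neg at hc
        have hjl : j + 1 ≤ l := by
          by_contra hcon
          push_neg at hcon
          have : s l ≤ s j := smono l j (by omega) (by omega)
          linarith
        have h1 : G r y < F r (j + 1) := hGubs j hj1 hj2 y hy1 hy2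
        have h2 : F r (j + 1) ≤ F r l := hFmono _ _ hjl (by omega)
        have h3 : F r l ≤ G r z := hGlb l hl1 hl2 z hz1 hz2
        linarith
    have hA : χ r α = sInf {y | s 0 ≤ y ∧ y ≤ s (M - 1) ∧ α ≤ G r y} := hχ r α
    have hmemtop : s (M - 1) ∈ {y | s 0 ≤ y ∧ y ≤ s (M - 1) ∧ α ≤ G r y} :=
      ⟨smono 0 (M - 1) (by omega) le_rfl, le_rfl, by rw [hGtop]; exact hα1⟩
    have hAne : ({y | s 0 ≤ y ∧ y ≤ s (M - 1) ∧ α ≤ G r y} : Set ℝ).Nonempty :=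
      ⟨_, hmemtop⟩
    have hAbdd : BddBelow {y | s 0 ≤ y ∧ y ≤ s (M - 1) ∧ α ≤ G r y} :=
      ⟨s 0, fun y hy => hy.1⟩
    have hGx := hGval k hk1 hkM x hxl.le hxr
    have hdiv : r k * (x - s (k - 1)) / (s k - s (k - 1)) * (s k - s (k - 1)) =
        r k * (x - s (k - 1)) := div_mul_cancel₀ _ (ne_of_gt hΔk)
    have hlin1 : (α * (s k - s (k - 1)) ≤
        (s k - x) * F r k + (x - s (k - 1)) * F r (k + 1)) ↔ α ≤ G r x := by
      rw [hGx, hFsucc]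
      constructor
      · intro h
        nlinarith [hdiv, hΔk]
      · intro h
        nlinarith [hdiv, mul_le_mul_of_nonneg_right h hΔk.le]
    have hlin2 : ((s k - x) * F r k + (x - s (k - 1)) * F r (k + 1) ≤
        α * (s k - s (k - 1))) ↔ G r x ≤ α := by
      rw [hGx, hFsucc]
      constructor
      · intro h
        nlinarith [hdiv, hΔk]
      · intro h
        nlinarith [hdiv, mul_le_mul_of_nonneg_right h hΔk.le]
    have hright : G r x < α → x < χ r α := by
      intro hlt
      rcases eq_or_lt_of_le hxM with heq | hxlt
      · rw [heq, hGtop] at hlt; linarith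
      · obtain ⟨j, hj1, hj2, hy1, hy2⟩ := hfind x hx0 hxlt
        have hΔj := hΔpos j hj1 hj2
        have hrj := hpos j (by omega)
        have hGxj := hGval j hj1 hj2 x hy1 hy2.le
        set ε := min (s j - x) ((α - G r x) * (s j - s (j - 1)) / r j) with hε
        have hεpos : 0 < ε :=
          lt_min (by linarith) (div_pos (mul_pos (by linarith) hΔj) hrj)
        have hε1 : ε ≤ s j - x := min_le_left _ _
        have hε2 : ε ≤ (α - G r x) * (s j - s (j - 1)) / r j := min_le_right _ _
        have hε2' : ε * r j ≤ (α - G r x) * (s j - s (j - 1)) := (le_div_iff₀ hrj).1 hε2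
        have hx'le : x + ε / 2 ≤ s j := by linarith
        have hGx' := hGval j hj1 hj2 (x + ε / 2) (by linarith) hx'le
        have h0 : r j * (x - s (j - 1)) = (G r x - F r j) * (s j - s (j - 1)) := by
          rw [hGxj]; field_simp; ring
        have hGx'lt : G r (x + ε / 2) < α := by
          rw [hGx']
          have hq : r j * (x + ε / 2 - s (j - 1)) / (s j - s (j - 1)) < α - F r j := by
            rw [div_lt_iff₀ hΔj]
            nlinarith [h0, hε2', mul_pos (show (0:ℝ) < α - G r x by linarith) hΔj]
          linarith
        have hlb : ∀ y ∈ {y | s 0 ≤ y ∧ y ≤ s (M - 1) ∧ α ≤ G r y}, x + ε / 2 ≤ y := by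
          intro y hy
          by_contra hcon
          push_neg at hcon
          have := hGmono y (x + ε / 2) hy.1
            (le_trans hx'le (smono j (M - 1) hj2 le_rfl)) hcon
          linarith [hy.2.2]
        have : x + ε / 2 ≤ χ r α := by
          rw [hA]; exact le_csInf hAne hlb
        linarith
    have hleft : α < G r x → χ r α < x := by
      intro hlt
      have hrk := hpos k (by omega)
      set ε := min (x - s (k - 1)) ((G r x - α) * (s k - s (k - 1)) / r k) with hε
      have hεpos : 0 < ε :=
        lt_min (by linarith) (div_pos (mul_pos (by linarith) hΔk) hrk)
      have hε1 : ε ≤ x - s (k - 1) := min_le_left _ _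
      have hε2 : ε ≤ (G r x - α) * (s k - s (k - 1)) / r k := min_le_right _ _
      have hε2' : ε * r k ≤ (G r x - α) * (s k - s (k - 1)) := (le_div_iff₀ hrk).1 hε2
      have hx''ge : s (k - 1) ≤ x - ε / 2 := by linarith
      have hGx'' := hGval k hk1 hkM (x - ε / 2) hx''ge (by linarith)
      have h0 : r k * (x - s (k - 1)) = (G r x - F r k) * (s k - s (k - 1)) := by
        rw [hGx]; field_simp; ring
      have hmem : α ≤ G r (x - ε / 2) := by
        rw [hGx'']
        have hq : α - F r k ≤ r k * (x - ε / 2 - s (k - 1)) / (s k - s (k - 1)) := by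
          rw [le_div_iff₀ hΔk]
          nlinarith [h0, hε2', mul_pos (show (0:ℝ) < G r x - α by linarith) hΔk]
        linarith
      have hcle : χ r α ≤ x - ε / 2 := by
        rw [hA]
        exact csInf_le hAbdd
          ⟨le_trans (smono 0 (k - 1) (by omega) (by omega)) hx''ge,
           le_trans (by linarith) hxM, hmem⟩
      linarith
    constructor
    · rw [hlin1]
      constructor
      · intro h
        by_contra hc
        push_neg at hc
        exact absurd h (not_le.2 (hright hc))
      · intro h
        rw [hA]
        exact csInf_le hAbdd ⟨hx0, hxM, h⟩
    · rw [hlin2]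
      constructor
      · intro h
        by_contra hc
        push_neg at hc
        exact absurd h (not_le.2 (hleft hc))
      · intro h
        rw [hA]
        apply le_csInf hAne
        intro y hy
        by_contra hc
        push_neg at hc
        have := hGmono y x hy.1 hxM hc
        linarith [hy.2.2]
  have hFlin : ∀ (a b : ℝ) (r1 r2 : ℕ → ℝ) (m : ℕ),
      F (a • r1 + b • r2) m = a * F r1 m + b * F r2 m := by
    intro a b r1 r2 m
    simp [hF, Finset.sum_add_distrib, Finset.mul_sum]
  have hcomb : ∀ (a b : ℝ) (r1 r2 : ℕ → ℝ), 0 ≤ a → 0 ≤ b → a + b = 1 →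
      (∀ i < M, 0 < r1 i) → (∑ i ∈ Finset.range M, r1 i) = 1 →
      (∀ i < M, 0 < r2 i) → (∑ i ∈ Finset.range M, r2 i) = 1 →
      (∀ i < M, 0 < (a • r1 + b • r2) i) ∧
      (∑ i ∈ Finset.range M, (a • r1 + b • r2) i) = 1 := by
    intro a b r1 r2 ha hb hab hp1 hs1 hp2 hs2
    constructor
    · intro i hi
      have e : (a • r1 + b • r2) i = a * r1 i + b * r2 i := by
        simp [smul_eq_mul]
      rw [e]
      rcases eq_or_lt_of_le ha with h | h
      · have hb1 : b = 1 := by linarith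
        rw [← h, hb1]
        simpa using hp2 i hi
      · have h1' := mul_pos h (hp1 i hi)
        have h2' := mul_nonneg hb (hp2 i hi).le
        linarith
    · have e : ∀ i, (a • r1 + b • r2) i = a * r1 i + b * r2 i := fun i => by
        simp [smul_eq_mul]
      rw [show (∑ i ∈ Finset.range M, (a • r1 + b • r2) i) =
          ∑ i ∈ Finset.range M, (a * r1 i + b * r2 i) from
          Finset.sum_congr rfl fun i _ => e i,
        Finset.sum_add_distrib, ← Finset.mul_sum, ← Finset.mul_sum, hs1, hs2,
        mul_one, mul_one, hab]
  refine ⟨key, ?_, ?_⟩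
  · intro r1 h1 r2 h2 a b ha hb hab
    obtain ⟨hp1, hs1, hχ1⟩ := h1
    obtain ⟨hp2, hs2, hχ2⟩ := h2
    obtain ⟨hpos', hsum'⟩ := hcomb a b r1 r2 ha hb hab hp1 hs1 hp2 hs2
    refine ⟨hpos', hsum', ?_⟩
    have l1 := ((key r1 hp1 hs1).1).1 hχ1
    have l2 := ((key r2 hp2 hs2).1).1 hχ2
    apply ((key _ hpos' hsum').1).2
    rw [hFlin a b r1 r2 k, hFlin a b r1 r2 (k + 1)]
    have e : α * (s k - s (k - 1)) =
        a * (α * (s k - s (k - 1))) + b * (α * (s k - s (k - 1))) := by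
      rw [← add_mul, hab, one_mul]
    nlinarith [mul_le_mul_of_nonneg_left l1 ha, mul_le_mul_of_nonneg_left l2 hb, e]
  · intro r1 h1 r2 h2 a b ha hb hab
    obtain ⟨hp1, hs1, hχ1⟩ := h1
    obtain ⟨hp2, hs2, hχ2⟩ := h2
    obtain ⟨hpos', hsum'⟩ := hcomb a b r1 r2 ha hb hab hp1 hs1 hp2 hs2
    refine ⟨hpos', hsum', ?_⟩
    have l1 := ((key r1 hp1 hs1).2).1 hχ1
    have l2 := ((key r2 hp2 hs2).2).1 hχ2
    apply ((key _ hpos' hsum').2).2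
    rw [hFlin a b r1 r2 k, hFlin a b r1 r2 (k + 1)]
    have e : α * (s k - s (k - 1)) =
        a * (α * (s k - s (k - 1))) + b * (α * (s k - s (k - 1))) := by
      rw [← add_mul, hab, one_mul]
    nlinarith [mul_le_mul_of_nonneg_left l1 ha, mul_le_mul_of_nonneg_left l2 hb, e]
end
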